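/- arXiv:math/0610271 — 5 statements merged into one kernel-verified Lean document; each statement's English description precedes it below -/
import Mathlib

section
/- Let (X_j : j ≥ 1) be i.i.d. real random variables with E[exp(ν X_1)] < 1 for some ν > 0, and S_n = X_1 + ... + X_n, S_0 = 0. Then P(max_{n ≥ 0} S_n > x) = o(e^{-ν x}) as x → ∞. -/
open MeasureTheory ProbabilityTheory Filter

/-- `P(max_{n ≥ 0} S_n > x) = o(e^{-ν x})` as `x → ∞` for a random walk with i.i.d.
increments satisfying `E[exp (ν X)] < 1`, i.e. `e^{ν x} P(max_n S_n > x) → 0`. -/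
theorem tail_max_random_walk_little_o
    {Ω : Type*} [MeasurableSpace Ω] (P : Measure Ω) [IsProbabilityMeasure P]
    (X : ℕ → Ω → ℝ) (hmeas : ∀ i, Measurable (X i))
    (hindep : iIndepFun X P)
    (hident : ∀ i, IdentDistrib (X i) (X 0) P P)
    (ν : ℝ) (hν : 0 < ν)
    (hint : Integrable (fun ω => Real.exp (ν * X 0 ω)) P)
    (hlt : ∫ ω, Real.exp (ν * X 0 ω) ∂P < 1) :
    Tendsto (fun x : ℝ => Real.exp (ν * x) *
        (P {ω | ∃ n : ℕ, ∑ i ∈ Finset.range n, X i ω > x}).toReal)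
      atTop (nhds 0) := by
  set ρ : ℝ := ∫ ω, Real.exp (ν * X 0 ω) ∂P with hρ
  have hρ0 : 0 ≤ ρ := integral_nonneg fun ω => (Real.exp_pos _).le
  -- the partial sums
  set S : ℕ → Ω → ℝ := fun n ω => ∑ i ∈ Finset.range n, X i ω with hS
  have hSmeas : ∀ n, Measurable (S n) := fun n =>
    Finset.measurable_sum _ fun i _ => hmeas i
  have hexpmeas : Measurable fun y : ℝ => Real.exp (ν * y) :=
    (measurable_const.mul measurable_id).exp
  have hintX : ∀ i, Integrable (fun ω => Real.exp (ν * X i ω)) P := fun i =>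
    (((hident i).comp hexpmeas).integrable_iff).mpr hint
  have hSint : ∀ n, Integrable (fun ω => Real.exp (ν * S n ω)) P := by
    intro n
    have := hindep.integrable_exp_mul_sum (t := ν) hmeas
      (s := Finset.range n) (fun i _ => hintX i)
    simpa [Finset.sum_apply] using this
  have hmgfX : ∀ i, mgf (X i) P ν = ρ := fun i =>
    ((hident i).comp hexpmeas).integral_eq
  have hSmgf : ∀ n, ∫ ω, Real.exp (ν * S n ω) ∂P = ρ ^ n := by
    intro n
    have := hindep.mgf_sum (t := ν) hmeas (Finset.range n)
    simp only [hmgfX, Finset.prod_const, Finset.card_range] at this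
    have heq : mgf (∑ i ∈ Finset.range n, X i) P ν
        = ∫ ω, Real.exp (ν * S n ω) ∂P := by
      simp [mgf, Finset.sum_apply, hS]
    rw [← heq, this]
  -- the events
  set A : ℕ → ℝ → Set Ω := fun n x => {ω | S n ω > x} with hA
  have hAmeas : ∀ n x, MeasurableSet (A n x) := fun n x =>
    measurableSet_lt measurable_const (hSmeas n)
  -- truncated exponential moments
  set g : ℕ → ℝ → ℝ := fun n x => ∫ ω in A n x, Real.exp (ν * S n ω) ∂P with hg
  have hg_nonneg : ∀ n x, 0 ≤ g n x := fun n x =>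
    setIntegral_nonneg (hAmeas n x) fun ω _ => (Real.exp_pos _).le
  have hg_le : ∀ n x, g n x ≤ ρ ^ n := by
    intro n x
    have := setIntegral_le_integral (s := A n x) (hSint n)
      (Filter.Eventually.of_forall fun ω => (Real.exp_pos _).le)
    rwa [hSmgf n] at this
  -- Chernoff-type bound
  have hcher : ∀ n x, Real.exp (ν * x) * (P (A n x)).toReal ≤ g n x := by
    intro n x
    have h1 : ∫ ω in A n x, Real.exp (ν * x) ∂P
        = (P (A n x)).toReal * Real.exp (ν * x) := by
      simp [setIntegral_const, Measure.real]
    calc Real.exp (ν * x) * (P (A n x)).toReal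
        = ∫ ω in A n x, Real.exp (ν * x) ∂P := by rw [h1, mul_comm]
      _ ≤ ∫ ω in A n x, Real.exp (ν * S n ω) ∂P := by
          refine setIntegral_mono_on (integrableOn_const (measure_ne_top _ _))
            ((hSint n).integrableOn) (hAmeas n x) fun ω hω => ?_
          exact Real.exp_le_exp.mpr (by
            have : x < S n ω := hω
            nlinarith)
      _ = g n x := rfl
  -- each g n · tends to 0
  have hg_tendsto : ∀ n, Tendsto (fun x => g n x) atTop (nhds 0) := by
    intro n
    have hrw : ∀ x, g n x
        = ∫ ω, (A n x).indicator (fun ω => Real.exp (ν * S n ω)) ω ∂P := by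
      intro x; rw [integral_indicator (hAmeas n x)]
    simp only [hrw]
    have h0 : (0 : ℝ) = ∫ ω, (0 : ℝ) ∂P := by simp
    rw [h0]
    apply tendsto_integral_filter_of_dominated_convergence
      (fun ω => Real.exp (ν * S n ω))
    · exact Filter.Eventually.of_forall fun x =>
        (((hSmeas n).const_mul ν).exp.indicator (hAmeas n x)).aestronglyMeasurable
    · refine Filter.Eventually.of_forall fun x => ?_
      refine Filter.Eventually.of_forall fun ω => ?_
      have := norm_indicator_le_norm_self
        (f := fun ω => Real.exp (ν * S n ω)) (s := A n x) (a := ω)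
      calc ‖(A n x).indicator (fun ω => Real.exp (ν * S n ω)) ω‖
          ≤ ‖Real.exp (ν * S n ω)‖ := this
        _ = Real.exp (ν * S n ω) := Real.norm_of_nonneg (Real.exp_pos _).le
    · exact hSint n
    · refine Filter.Eventually.of_forall fun ω => ?_
      have hev : ∀ᶠ x in atTop,
          (A n x).indicator (fun ω => Real.exp (ν * S n ω)) ω = 0 := by
        filter_upwards [eventually_ge_atTop (S n ω)] with x hx
        exact Set.indicator_of_notMem (by simp [hA, Set.mem_setOf_eq]; exact hx) _
      exact Tendsto.congr' (Filter.EventuallyEq.symm hev) tendsto_const_nhds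
  -- sum of the g's tends to 0
  have hsumρ : Summable (fun n : ℕ => ρ ^ n) :=
    summable_geometric_of_lt_one hρ0 (by rwa [hρ] at hlt)
  have htsum : Tendsto (fun x => ∑' n, g n x) atTop (nhds 0) := by
    have := tendsto_tsum_of_dominated_convergence (𝓕 := atTop)
      (f := fun x n => g n x) (g := fun _ => (0 : ℝ)) (bound := fun n => ρ ^ n)
      hsumρ hg_tendsto
      (Filter.Eventually.of_forall fun x n => by
        rw [Real.norm_of_nonneg (hg_nonneg n x)]; exact hg_le n x)
    simpa using this
  -- union bound
  have hunion : ∀ x, Real.exp (ν * x) *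
      (P {ω | ∃ n : ℕ, ∑ i ∈ Finset.range n, X i ω > x}).toReal ≤ ∑' n, g n x := by
    intro x
    have hUeq : {ω | ∃ n : ℕ, ∑ i ∈ Finset.range n, X i ω > x} = ⋃ n, A n x := by
      ext ω; simp [hA, hS, Set.mem_setOf_eq]
    have hgsummable : Summable (fun n => Real.exp (-(ν * x)) * g n x) := by
      refine Summable.of_nonneg_of_le
        (fun n => mul_nonneg (Real.exp_pos _).le (hg_nonneg n x))
        (fun n => mul_le_mul_of_nonneg_left (hg_le n x) (Real.exp_pos _).le)
        (hsumρ.mul_left _)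
    have hPA : ∀ n, P (A n x) ≤ ENNReal.ofReal (Real.exp (-(ν * x)) * g n x) := by
      intro n
      have h1 : (P (A n x)).toReal ≤ Real.exp (-(ν * x)) * g n x := by
        rw [Real.exp_neg, inv_mul_eq_div, le_div_iff₀ (Real.exp_pos _)]
        nlinarith [hcher n x]
      calc P (A n x) = ENNReal.ofReal (P (A n x)).toReal := by
            rw [ENNReal.ofReal_toReal (measure_ne_top _ _)]
        _ ≤ ENNReal.ofReal (Real.exp (-(ν * x)) * g n x) := ENNReal.ofReal_le_ofReal h1
    have hPU : P {ω | ∃ n : ℕ, ∑ i ∈ Finset.range n, X i ω > x}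
        ≤ ENNReal.ofReal (∑' n, Real.exp (-(ν * x)) * g n x) := by
      rw [hUeq]
      calc P (⋃ n, A n x) ≤ ∑' n, P (A n x) := measure_iUnion_le _
        _ ≤ ∑' n, ENNReal.ofReal (Real.exp (-(ν * x)) * g n x) :=
            ENNReal.tsum_le_tsum hPA
        _ = ENNReal.ofReal (∑' n, Real.exp (-(ν * x)) * g n x) :=
            (ENNReal.ofReal_tsum_of_nonneg
              (fun n => mul_nonneg (Real.exp_pos _).le (hg_nonneg n x)) hgsummable).symm
    have htr : (P {ω | ∃ n : ℕ, ∑ i ∈ Finset.range n, X i ω > x}).toReal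
        ≤ ∑' n, Real.exp (-(ν * x)) * g n x := by
      have := ENNReal.toReal_mono ENNReal.ofReal_ne_top hPU
      rwa [ENNReal.toReal_ofReal (tsum_nonneg fun n =>
        mul_nonneg (Real.exp_pos _).le (hg_nonneg n x))] at this
    rw [tsum_mul_left] at htr
    calc Real.exp (ν * x) *
        (P {ω | ∃ n : ℕ, ∑ i ∈ Finset.range n, X i ω > x}).toReal
        ≤ Real.exp (ν * x) * (Real.exp (-(ν * x)) * ∑' n, g n x) :=
          mul_le_mul_of_nonneg_left htr (Real.exp_pos _).le
      _ = ∑' n, g n x := by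
          rw [← mul_assoc, ← Real.exp_add]
          simp
  refine squeeze_zero (fun x => mul_nonneg (Real.exp_pos _).le ENNReal.toReal_nonneg)
    hunion htsum
end

section
/- Let (X_j : j ≥ 1) be i.i.d. with E X_1 = μ ∈ (-∞, 0), S_0 = 0, S_n = X_1 + ... + X_n, and let (ξ_j : j ≥ 0) be an identically distributed (not necessarily independent) sequence with E[ξ_0^+] < ∞, where ξ^+ = max(ξ, 0). Then M_∞ = sup_{k ≥ 0} (S_k + ξ_k) < ∞ almost surely. -/
open MeasureTheory ProbabilityTheory Filter Topology

lemma bddAbove_range_of_eventually_le (f : ℕ → ℝ) (N : ℕ)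
    (h : ∀ n, N ≤ n → f n ≤ 0) : BddAbove (Set.range f) := by
  have hsub : Set.range f ⊆ (f '' Set.Iio N) ∪ Set.Iic 0 := by
    rintro x ⟨n, rfl⟩
    rcases lt_or_ge n N with hn | hn
    · exact Or.inl ⟨n, hn, rfl⟩
    · exact Or.inr (h n hn)
  exact BddAbove.mono hsub
    (((Set.finite_Iio N).image f).bddAbove.union bddAbove_Iic)

/-- For a negative-drift random walk with i.i.d. increments and an identically
distributed perturbation sequence with integrable positive part, the all-time
supremum `M_∞ = sup_k (S_k + ξ_k)` is finite almost surely. -/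
theorem perturbed_random_walk_sup_finite
    {Ω : Type*} [MeasurableSpace Ω] (P : Measure Ω) [IsProbabilityMeasure P]
    (X : ℕ → Ω → ℝ) (ξ : ℕ → Ω → ℝ)
    (hXmeas : ∀ i, Measurable (X i)) (hξmeas : ∀ j, Measurable (ξ j))
    (hindep : iIndepFun X P)
    (hident : ∀ i, IdentDistrib (X i) (X 0) P P)
    (hXint : Integrable (X 0) P) (hdrift : ∫ ω, X 0 ω ∂P < 0)
    (hξident : ∀ j, IdentDistrib (ξ j) (ξ 0) P P)
    (hξint : Integrable (fun ω => max (ξ 0 ω) 0) P) :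
    ∀ᵐ ω ∂P, BddAbove (Set.range fun k : ℕ =>
      (∑ i ∈ Finset.range k, X i ω) + ξ k ω) := by
  set μ : ℝ := ∫ ω, X 0 ω ∂P with hμ
  set ε : ℝ := -μ / 4 with hε
  have hεpos : 0 < ε := by simp [hε]; linarith
  -- Strong law of large numbers
  have hSLLN : ∀ᵐ ω ∂P, Tendsto (fun n : ℕ => (∑ i ∈ Finset.range n, X i ω) / n)
      atTop (𝓝 μ) :=
    strong_law_ae_real X hXint (fun i j hij => hindep.indepFun hij) hident
  -- Borel-Cantelli for the perturbations
  have hBC : ∀ᵐ ω ∂P, ∀ᶠ n : ℕ in atTop, ω ∉ {ω | ξ n ω ∈ Set.Ioi (ε * n)} := by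
    apply ae_eventually_notMem
    have key : (∑' n : ℕ, P {ω | ξ n ω ∈ Set.Ioi (ε * n)}) < ⊤ := by
      let mΩ : MeasureSpace Ω := ⟨P⟩
      have : IsProbabilityMeasure (ℙ : Measure Ω) := by assumption
      set Y : Ω → ℝ := fun ω => max (ξ 0 ω) 0 / ε with hY
      have hYint : Integrable Y P := hξint.div_const ε
      have hYnonneg : 0 ≤ Y := fun ω => div_nonneg (le_max_right _ _) hεpos.le
      have hfin := tsum_prob_mem_Ioi_lt_top hYint hYnonneg
      refine lt_of_le_of_lt (ENNReal.tsum_le_tsum fun n => ?_) hfin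
      have h1 : P {ω | ξ n ω ∈ Set.Ioi (ε * n)}
          = P {ω | ξ 0 ω ∈ Set.Ioi (ε * n)} :=
        (hξident n).measure_mem_eq measurableSet_Ioi
      rw [h1]
      apply measure_mono
      intro ω hω
      simp only [Set.mem_setOf_eq, Set.mem_Ioi] at hω ⊢
      have hpos : (0:ℝ) ≤ ε * n := by positivity
      have : max (ξ 0 ω) 0 = ξ 0 ω := max_eq_left (le_trans hpos hω.le)
      rw [hY]
      simp only [this]
      rw [lt_div_iff₀ hεpos]
      linarith [hω]
    exact key.ne
  filter_upwards [hSLLN, hBC] with ω hS hξ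
  have hS2 : ∀ᶠ n : ℕ in atTop, (∑ i ∈ Finset.range n, X i ω) / n < μ / 2 :=
    hS.eventually_lt_const (by linarith)
  have hall : ∀ᶠ n : ℕ in atTop, (∑ i ∈ Finset.range n, X i ω) + ξ n ω ≤ 0 := by
    filter_upwards [hS2, hξ, eventually_ge_atTop 1] with n h1 h2 h3
    have hnpos : (0:ℝ) < n := by exact_mod_cast h3
    have hSn : (∑ i ∈ Finset.range n, X i ω) ≤ μ / 2 * n := by
      have := (div_lt_iff₀ hnpos).mp h1
      linarith
    have hξn : ξ n ω ≤ ε * n := by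
      simpa [Set.mem_Ioi, not_lt] using h2
    have : μ / 2 * n + ε * n ≤ 0 := by
      have : μ / 2 + ε ≤ 0 := by rw [hε]; linarith
      nlinarith
    linarith
  obtain ⟨N, hN⟩ := eventually_atTop.mp hall
  exact bddAbove_range_of_eventually_le _ N hN
end

section
/- Let (X_j : j ≥ 1) be i.i.d. with E X_1 = μ < 0, S_n the associated random walk, and let (ξ_j : j ≥ 0) be i.i.d. random variables (independent of nothing assumed). If M_∞ = sup_{k ≥ 0}(S_k + ξ_k) < ∞ almost surely, then E[ξ_0^+] < ∞. -/
open MeasureTheory ProbabilityTheory Filter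
open scoped ENNReal

lemma aux_lintegral_le_tsum_tail {Ω : Type*} [MeasurableSpace Ω] (P : Measure Ω)
    {Y : Ω → ℝ} (hY : Measurable Y) :
    ∫⁻ ω, ENNReal.ofReal (Y ω) ∂P ≤ ∑' n : ℕ, P {ω | (n : ℝ) < Y ω} := by
  have hms : ∀ n : ℕ, MeasurableSet {ω | (n : ℝ) < Y ω} := fun n =>
    measurableSet_lt measurable_const hY
  have key : ∀ ω, ENNReal.ofReal (Y ω) ≤ ∑' n : ℕ,
      Set.indicator {x | (n : ℝ) < Y x} (fun _ => (1 : ℝ≥0∞)) ω := by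
    intro ω
    have h1 : ∀ n : ℕ, Set.indicator {x | (n : ℝ) < Y x} (fun _ => (1 : ℝ≥0∞)) ω
        = if n < ⌈Y ω⌉₊ then 1 else 0 := by
      intro n
      by_cases h : (n : ℝ) < Y ω
      · simp [Set.indicator, Set.mem_setOf_eq, h, Nat.lt_ceil.2 h]
      · simp [Set.indicator, Set.mem_setOf_eq, h, Nat.lt_ceil]
    calc ENNReal.ofReal (Y ω) ≤ (⌈Y ω⌉₊ : ℝ≥0∞) := by
          rw [← ENNReal.ofReal_natCast]
          exact ENNReal.ofReal_le_ofReal (Nat.le_ceil _)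
      _ = ∑ n ∈ Finset.range ⌈Y ω⌉₊,
            (if n < ⌈Y ω⌉₊ then (1 : ℝ≥0∞) else 0) := by
          rw [Finset.sum_ite_of_true (fun n hn => Finset.mem_range.1 hn)]
          simp
      _ ≤ ∑' n : ℕ, (if n < ⌈Y ω⌉₊ then (1 : ℝ≥0∞) else 0) := ENNReal.sum_le_tsum _
      _ = ∑' n : ℕ, Set.indicator {x | (n : ℝ) < Y x} (fun _ => (1 : ℝ≥0∞)) ω := by
          exact (tsum_congr h1).symm
  calc ∫⁻ ω, ENNReal.ofReal (Y ω) ∂P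
      ≤ ∫⁻ ω, ∑' n : ℕ, Set.indicator {x | (n : ℝ) < Y x} (fun _ => (1 : ℝ≥0∞)) ω ∂P :=
        lintegral_mono key
    _ = ∑' n : ℕ, ∫⁻ ω, Set.indicator {x | (n : ℝ) < Y x} (fun _ => (1 : ℝ≥0∞)) ω ∂P :=
        lintegral_tsum fun n => ((measurable_const.indicator (hms n)).aemeasurable)
    _ = ∑' n : ℕ, P {ω | (n : ℝ) < Y ω} := by
        refine tsum_congr fun n => ?_
        rw [lintegral_indicator (hms n)]
        simp

/-- Converse: if the all-time maximum of a perturbed random walk (negative-drift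
i.i.d. increments, i.i.d. perturbations) is finite almost surely, then the
positive part of the perturbation is integrable. -/
theorem perturbed_random_walk_sup_finite_implies_integrable
    {Ω : Type*} [MeasurableSpace Ω] (P : Measure Ω) [IsProbabilityMeasure P]
    (X : ℕ → Ω → ℝ) (ξ : ℕ → Ω → ℝ)
    (hXmeas : ∀ i, Measurable (X i)) (hξmeas : ∀ j, Measurable (ξ j))
    (hindep : iIndepFun X P)
    (hident : ∀ i, IdentDistrib (X i) (X 0) P P)
    (hXint : Integrable (X 0) P) (hdrift : ∫ ω, X 0 ω ∂P < 0)
    (hξindep : iIndepFun ξ P)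
    (hξident : ∀ j, IdentDistrib (ξ j) (ξ 0) P P)
    (hfin : ∀ᵐ ω ∂P, BddAbove (Set.range fun k : ℕ =>
      (∑ i ∈ Finset.range k, X i ω) + ξ k ω)) :
    Integrable (fun ω => max (ξ 0 ω) 0) P := by
  by_contra hni
  set m : ℝ := ∫ ω, X 0 ω ∂P with hm
  set c : ℝ := 2 - m with hc
  have hcpos : 0 < c := by linarith
  -- Z = (positive part of ξ 0) / c is not integrable
  set Z : Ω → ℝ := fun ω => max (ξ 0 ω) 0 / c with hZ
  have hZmeas : Measurable Z := ((hξmeas 0).max measurable_const).div_const c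
  have hZnonneg : ∀ ω, 0 ≤ Z ω := fun ω => div_nonneg (le_max_right _ _) hcpos.le
  have hZni : ¬ Integrable Z P := by
    intro h
    apply hni
    have := h.const_mul c
    convert this using 1
    ext ω
    show max (ξ 0 ω) 0 = c * (max (ξ 0 ω) 0 / c)
    field_simp [hcpos.ne']
  -- hence its lintegral is infinite
  have hZtop : ∫⁻ ω, ENNReal.ofReal (Z ω) ∂P = ∞ := by
    by_contra h
    apply hZni
    refine ⟨hZmeas.aestronglyMeasurable, ?_⟩
    rw [hasFiniteIntegral_iff_norm]
    simpa [Real.norm_of_nonneg (hZnonneg _)] using lt_top_iff_ne_top.2 h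
  -- the tail sum is infinite
  have htail : (∑' n : ℕ, P {ω | (n : ℝ) < Z ω}) = ∞ :=
    top_le_iff.1 (hZtop ▸ aux_lintegral_le_tsum_tail P hZmeas)
  -- the events
  set s : ℕ → Set Ω := fun n => ξ n ⁻¹' Set.Ioi ((n : ℝ) * c) with hs
  have hsm : ∀ n, MeasurableSet (s n) := fun n => (hξmeas n) measurableSet_Ioi
  have hset : ∀ n : ℕ, {ω | (n : ℝ) < Z ω} = ξ 0 ⁻¹' Set.Ioi ((n : ℝ) * c) := by
    intro n
    ext ω
    simp only [Set.mem_setOf_eq, Set.mem_preimage, Set.mem_Ioi, hZ]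
    rw [lt_div_iff₀ hcpos, lt_max_iff]
    constructor
    · rintro (h | h)
      · exact h
      · exact absurd h (not_lt.2 (mul_nonneg (Nat.cast_nonneg n) hcpos.le))
    · exact Or.inl
  have hsum : (∑' n : ℕ, P (s n)) = ∞ := by
    rw [← htail]
    refine tsum_congr fun n => ?_
    rw [hset n, hs]
    exact ((hξident n).measure_mem_eq measurableSet_Ioi)
  -- independence of the events
  have hsindep : iIndepSet s P := by
    rw [iIndepSet_iff_meas_biInter hsm]
    intro S
    exact hξindep.meas_biInter fun i _ => ⟨Set.Ioi ((i : ℝ) * c), measurableSet_Ioi, rfl⟩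
  have hBC : P (limsup s atTop) = 1 := measure_limsup_eq_one hsm hsindep hsum
  have hBCae : ∀ᵐ ω ∂P, ω ∈ limsup s atTop := by
    rw [ae_iff]
    have := measure_compl (MeasurableSet.measurableSet_limsup hsm) (measure_ne_top P _)
    simp only [hBC, measure_univ, tsub_self] at this
    exact this
  -- strong law of large numbers
  have hpair : Pairwise (Function.onFun (IndepFun · · P) X) := fun i j hij => hindep.indepFun hij
  have hSLLN := strong_law_ae X hXint hpair hident
  -- combine
  have : ∀ᵐ ω ∂P, False := by
    filter_upwards [hfin, hBCae, hSLLN] with ω hb hio hsl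
    obtain ⟨B, hB⟩ := hb
    have hfreq : ∃ᶠ n in atTop, ω ∈ s n := mem_limsup_iff_frequently_mem.1 hio
    -- eventually S_n > (m - 1) * n
    have hev : ∀ᶠ n : ℕ in atTop, (m - 1) * n < ∑ i ∈ Finset.range n, X i ω := by
      have h1 : ∀ᶠ n : ℕ in atTop,
          (n : ℝ)⁻¹ • (∑ i ∈ Finset.range n, X i ω) ∈ Set.Ioi (m - 1) := by
        refine hsl (Ioi_mem_nhds ?_)
        simpa [hm] using sub_lt_self m one_pos
      filter_upwards [h1, eventually_ge_atTop 1] with n hn hn1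
      have hnpos : (0 : ℝ) < n := by exact_mod_cast hn1
      have := hn
      simp only [Set.mem_Ioi, smul_eq_mul] at this
      calc (m - 1) * n < ((n : ℝ)⁻¹ * (∑ i ∈ Finset.range n, X i ω)) * n := by
            exact mul_lt_mul_of_pos_right this hnpos
        _ = ∑ i ∈ Finset.range n, X i ω := by
            field_simp
    -- pick n with all properties
    obtain ⟨N₀, hN₀⟩ := eventually_atTop.1 hev
    obtain ⟨n, hn, hns⟩ := (frequently_atTop.1 hfreq) (max N₀ ⌈B⌉₊)
    have hn1 : N₀ ≤ n := le_trans (le_max_left _ _) hn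
    have hn2 : (⌈B⌉₊ : ℝ) ≤ n := by exact_mod_cast le_trans (le_max_right _ _) hn
    have hξn : (n : ℝ) * c < ξ n ω := hns
    have hSn : (m - 1) * n < ∑ i ∈ Finset.range n, X i ω := hN₀ n hn1
    have hBn : (∑ i ∈ Finset.range n, X i ω) + ξ n ω ≤ B := hB ⟨n, rfl⟩
    have hBceil : B ≤ (⌈B⌉₊ : ℝ) := Nat.le_ceil B
    have : (n : ℝ) < B := by
      have h2 : (m - 1) * n + (n : ℝ) * c < (∑ i ∈ Finset.range n, X i ω) + ξ n ω :=
        add_lt_add hSn hξn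
      have h3 : (m - 1) * n + (n : ℝ) * c = n := by rw [hc]; ring
      linarith
    linarith
  obtain ⟨ω, hω⟩ := this.exists
  exact hω
end

section
/- Under the assumptions of the integral equation u* = b + T u* for the tail of the maximum of a perturbed random walk with i.i.d. pairs ((ξ_j, X_{j+1})), the solution is given by the Neumann series u* = ∑_{n=0}^∞ T^n b, where T^0 is the identity. -/
open MeasureTheory ProbabilityTheory

/-- The operator `(Tg)(x) = ∫ g(x - y) P(ξ₀ ≤ x, X₁ ∈ dy)`, realized as an
integral over the event `{ξ₀ ≤ x}` of `g (x - X₁)`. -/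
noncomputable def perturbT {Ω : Type*} [MeasurableSpace Ω] (P : Measure Ω)
    (ξ₀ X₁ : Ω → ℝ) (g : ℝ → ℝ) : ℝ → ℝ :=
  fun x => ∫ ω in {ω | ξ₀ ω ≤ x}, g (x - X₁ ω) ∂P

namespace NeumannAux

/-- Recursively defined "first exceedance at time `n`" set on the canonical space
of `n+1` pairs. -/
def Bset : (n : ℕ) → ℝ → Set (Fin (n + 1) → ℝ × ℝ)
  | 0, x => {f | x < (f 0).1}
  | (n + 1), x => {f | (f 0).1 ≤ x ∧ Fin.tail f ∈ Bset n (x - (f 0).2)}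

lemma measurableSet_graph (n : ℕ) :
    MeasurableSet {q : ℝ × (Fin (n + 1) → ℝ × ℝ) | q.2 ∈ Bset n q.1} := by
  induction n with
  | zero =>
    have h : {q : ℝ × (Fin 1 → ℝ × ℝ) | q.2 ∈ Bset 0 q.1}
        = {q : ℝ × (Fin 1 → ℝ × ℝ) | q.1 < (q.2 0).1} := rfl
    rw [h]
    exact measurableSet_lt measurable_fst
      (measurable_fst.comp ((measurable_pi_apply 0).comp measurable_snd))
  | succ n ih =>
    have hφ : Measurable (fun q : ℝ × (Fin (n + 2) → ℝ × ℝ) =>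
        (q.1 - (q.2 0).2, Fin.tail q.2)) := by
      refine Measurable.prodMk ?_ ?_
      · exact measurable_fst.sub
          (measurable_snd.comp ((measurable_pi_apply 0).comp measurable_snd))
      · exact measurable_pi_lambda _ fun j => (measurable_pi_apply j.succ).comp measurable_snd
    have h : {q : ℝ × (Fin (n + 2) → ℝ × ℝ) | q.2 ∈ Bset (n + 1) q.1}
        = {q : ℝ × (Fin (n + 2) → ℝ × ℝ) | (q.2 0).1 ≤ q.1}
          ∩ (fun q : ℝ × (Fin (n + 2) → ℝ × ℝ) => (q.1 - (q.2 0).2, Fin.tail q.2)) ⁻¹'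
            {q : ℝ × (Fin (n + 1) → ℝ × ℝ) | q.2 ∈ Bset n q.1} := by
      ext q
      simp only [Set.mem_setOf_eq, Set.mem_inter_iff, Set.mem_preimage, Bset]
    rw [h]
    exact (measurableSet_le (measurable_fst.comp ((measurable_pi_apply 0).comp measurable_snd))
      measurable_fst).inter (ih.preimage hφ)

lemma measurableSet_Bset (n : ℕ) (x : ℝ) : MeasurableSet (Bset n x) := by
  have h := (measurableSet_graph n).preimage (measurable_prodMk_left (x := x))
  simpa [Set.preimage_setOf_eq] using h

lemma measurable_piBset (μ : Measure (ℝ × ℝ)) [IsProbabilityMeasure μ] (n : ℕ) :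
    Measurable fun y : ℝ => Measure.pi (fun _ : Fin (n + 1) => μ) (Bset n y) := by
  have h := measurable_measure_prodMk_left
    (ν := Measure.pi (fun _ : Fin (n + 1) => μ)) (measurableSet_graph n)
  simpa [Set.preimage_setOf_eq] using h

lemma pi_Bset_succ (μ : Measure (ℝ × ℝ)) [IsProbabilityMeasure μ] (n : ℕ) (x : ℝ) :
    Measure.pi (fun _ : Fin (n + 2) => μ) (Bset (n + 1) x)
      = ∫⁻ p in {p : ℝ × ℝ | p.1 ≤ x},
          Measure.pi (fun _ : Fin (n + 1) => μ) (Bset n (x - p.2)) ∂μ := by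
  set ν := Measure.pi (fun _ : Fin (n + 1) => μ) with hν
  set C : Set ((ℝ × ℝ) × (Fin (n + 1) → ℝ × ℝ)) :=
    {q | q.1.1 ≤ x ∧ q.2 ∈ Bset n (x - q.1.2)} with hC
  have hφ : Measurable fun q : (ℝ × ℝ) × (Fin (n + 1) → ℝ × ℝ) => (x - q.1.2, q.2) :=
    (measurable_const.sub (measurable_snd.comp measurable_fst)).prodMk measurable_snd
  have hCm : MeasurableSet C := by
    have h : C = {q : (ℝ × ℝ) × (Fin (n + 1) → ℝ × ℝ) | q.1.1 ≤ x}
        ∩ (fun q : (ℝ × ℝ) × (Fin (n + 1) → ℝ × ℝ) => (x - q.1.2, q.2)) ⁻¹'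
          {q : ℝ × (Fin (n + 1) → ℝ × ℝ) | q.2 ∈ Bset n q.1} := by
      ext q; simp [hC]
    rw [h]
    exact (measurableSet_le (measurable_fst.comp measurable_fst) measurable_const).inter
      ((measurableSet_graph n).preimage hφ)
  have hpre : Bset (n + 1) x
      = (MeasurableEquiv.piFinSuccAbove (fun _ : Fin (n + 2) => ℝ × ℝ) 0) ⁻¹' C := by
    ext f
    have he : (MeasurableEquiv.piFinSuccAbove (fun _ : Fin (n + 2) => ℝ × ℝ) 0) f
        = (f 0, Fin.tail f) := by
      simp only [MeasurableEquiv.piFinSuccAbove_apply]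
      refine Prod.ext rfl ?_
      funext j
      simp [Fin.removeNth, Fin.succAbove, Fin.tail]
    simp only [Set.mem_preimage, he, hC, Set.mem_setOf_eq, Bset]
  have hmp := measurePreserving_piFinSuccAbove (fun _ : Fin (n + 2) => μ) 0
  rw [hpre, hmp.measure_preimage hCm.nullMeasurableSet]
  rw [Measure.prod_apply hCm]
  rw [← lintegral_indicator (measurableSet_le measurable_fst measurable_const)]
  refine lintegral_congr fun p => ?_
  by_cases hp : p.1 ≤ x
  · have h : Prod.mk p ⁻¹' C = Bset n (x - p.2) := by
      ext g; simp [hC, hp]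
    rw [h]
    exact (Set.indicator_of_mem (show p ∈ {p : ℝ × ℝ | p.1 ≤ x} from hp)
      (fun p => ν (Bset n (x - p.2)))).symm
  · have h : Prod.mk p ⁻¹' C = ∅ := by
      ext g; simp [hC, hp]
    rw [h, Set.indicator_of_notMem (show p ∉ {p : ℝ × ℝ | p.1 ≤ x} from hp)]
    simp

lemma mem_Bset : ∀ (n : ℕ) (x : ℝ) (f : ℕ → ℝ × ℝ),
    ((fun j : Fin (n + 1) => f j) ∈ Bset n x) ↔
      ((∀ j < n, (∑ i ∈ Finset.range j, (f i).2) + (f j).1 ≤ x) ∧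
        x < (∑ i ∈ Finset.range n, (f i).2) + (f n).1) := by
  intro n
  induction n with
  | zero =>
    intro x f
    simp [Bset]
  | succ n ih =>
    intro x f
    have htail : Fin.tail (fun j : Fin (n + 2) => f j)
        = fun j : Fin (n + 1) => (fun i : ℕ => f (i + 1)) j := by
      funext j
      simp [Fin.tail]
    have key := ih (x - (f 0).2) (fun i : ℕ => f (i + 1))
    have h0 : ((fun j : Fin (n + 2) => f j) ∈ Bset (n + 1) x) ↔
        ((f 0).1 ≤ x ∧ (Fin.tail (fun j : Fin (n + 2) => f j)) ∈ Bset n (x - (f 0).2)) :=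
      Iff.rfl
    rw [h0, htail, key]
    constructor
    · rintro ⟨h0, h1, h2⟩
      refine ⟨?_, ?_⟩
      · intro j hj
        cases j with
        | zero => simpa using h0
        | succ j =>
          have := h1 j (by omega)
          rw [Finset.sum_range_succ']
          linarith
      · rw [Finset.sum_range_succ']
        linarith
    · rintro ⟨h1, h2⟩
      have ha := h1 0 (Nat.succ_pos n)
      simp only [Finset.range_zero, Finset.sum_empty, zero_add] at ha
      refine ⟨ha, fun j hj => ?_, ?_⟩
      · have := h1 (j + 1) (by omega)
        rw [Finset.sum_range_succ'] at this
        linarith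
      · rw [Finset.sum_range_succ'] at h2
        linarith

end NeumannAux

open NeumannAux

/-- Neumann-series representation for the tail of the maximum of a perturbed
random walk with i.i.d. pairs `(ξ_j, X_{j+1})`:
`P(M_∞ > x) = ∑_{n=0}^∞ (Tⁿ b)(x)` with `b(x) = P(ξ₀ > x)` and `T⁰ = id`. -/
theorem tail_perturbed_random_walk_neumann_series
    {Ω : Type*} [MeasurableSpace Ω] (P : Measure Ω) [IsProbabilityMeasure P]
    (X : ℕ → Ω → ℝ) (ξ : ℕ → Ω → ℝ)
    (hXmeas : ∀ i, Measurable (X i)) (hξmeas : ∀ j, Measurable (ξ j))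
    (hpairindep : iIndepFun
      (fun j ω => (ξ j ω, X (j + 1) ω)) P)
    (hpairident : ∀ j, IdentDistrib (fun ω => (ξ j ω, X (j + 1) ω))
      (fun ω => (ξ 0 ω, X 1 ω)) P P) :
    ∀ x : ℝ,
      (P {ω | ∃ k : ℕ,
          (∑ i ∈ Finset.range k, X (i + 1) ω) + ξ k ω > x}).toReal
        = ∑' n : ℕ,
            ((perturbT P (ξ 0) (X 1))^[n]
              (fun y => (P {ω | ξ 0 ω > y}).toReal)) x := by
  classical
  intro x
  set Z : ℕ → Ω → ℝ × ℝ := fun j ω => (ξ j ω, X (j + 1) ω) with hZdef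
  have hZm : ∀ j, Measurable (Z j) := fun j => (hξmeas j).prodMk (hXmeas (j + 1))
  set μ : Measure (ℝ × ℝ) := P.map (Z 0) with hμdef
  have hμprob : IsProbabilityMeasure μ := Measure.isProbabilityMeasure_map (hZm 0).aemeasurable
  -- the law of any finite vector of pairs is the product measure
  have hlaw : ∀ n : ℕ, P.map (fun ω (j : Fin (n + 1)) => Z j ω)
      = Measure.pi (fun _ : Fin (n + 1) => μ) := by
    intro n
    have hV : Measurable (fun ω (j : Fin (n + 1)) => Z j ω) :=
      measurable_pi_lambda _ fun j => hZm j
    refine (Measure.pi_eq fun s hs => ?_).symm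
    rw [Measure.map_apply hV (MeasurableSet.univ_pi hs)]
    have hpre : (fun ω (j : Fin (n + 1)) => Z j ω) ⁻¹' Set.pi Set.univ s
        = ⋂ j : Fin (n + 1), Z j ⁻¹' s j := by
      ext ω; simp [Set.mem_pi]
    rw [hpre]
    set A : ℕ → Set (ℝ × ℝ) :=
      fun i => ⋂ (j : Fin (n + 1)) (_ : (j : ℕ) = i), s j with hA
    have hAm : ∀ i, MeasurableSet (A i) := fun i =>
      MeasurableSet.iInter fun j => MeasurableSet.iInter fun _ => hs j
    set t : ℕ → Set Ω := fun i => Z i ⁻¹' A i with ht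
    have h1 : (⋂ j : Fin (n + 1), Z j ⁻¹' s j)
        = ⋂ i ∈ Finset.image (fun j : Fin (n + 1) => (j : ℕ)) Finset.univ, t i := by
      ext ω
      simp only [Set.mem_iInter, Set.mem_preimage, Finset.mem_image, Finset.mem_univ,
        true_and, ht, hA]
      constructor
      · rintro h i ⟨j, rfl⟩
        intro j' hj'
        have : j' = j := Fin.val_injective hj'
        subst this
        exact h j'
      · intro h j
        exact h (j : ℕ) ⟨j, rfl⟩ j rfl
    rw [h1, hpairindep.meas_biInter (fun i _ => ⟨A i, hAm i, rfl⟩)]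
    rw [Finset.prod_image (fun a _ b _ h => Fin.val_injective h)]
    refine Finset.prod_congr rfl fun j _ => ?_
    have hAj : A (j : ℕ) = s j := by
      ext p
      simp only [Set.mem_iInter, hA]
      constructor
      · intro h; exact h j rfl
      · intro hp j' hj'
        have : j' = j := Fin.val_injective hj'
        subst this; exact hp
    have h2 : P (Z (j : ℕ) ⁻¹' A (j : ℕ)) = (P.map (Z (j : ℕ))) (s j) := by
      rw [hAj, Measure.map_apply (hZm _) (hs j)]
    have hmap : P.map (Z (j : ℕ)) = μ := (hpairident (j : ℕ)).map_eq
    rw [h2, hmap]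
  -- iterates of T
  have hiter : ∀ n : ℕ, (perturbT P (ξ 0) (X 1))^[n] (fun y => (P {ω | ξ 0 ω > y}).toReal)
      = fun y => ((Measure.pi (fun _ : Fin (n + 1) => μ)) (Bset n y)).toReal := by
    intro n
    induction n with
    | zero =>
      funext y
      simp only [Function.iterate_zero, id_eq]
      have hmp := measurePreserving_funUnique μ (Fin 1)
      have hset : Bset 0 y
          = (MeasurableEquiv.funUnique (Fin 1) (ℝ × ℝ)) ⁻¹' {p : ℝ × ℝ | y < p.1} := rfl
      erw [hset, hmp.measure_preimage (show MeasurableSet {p : ℝ × ℝ | y < p.1} from measurableSet_lt measurable_const measurable_fst).nullMeasurableSet]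
      rw [hμdef, Measure.map_apply (hZm 0) (measurableSet_lt measurable_const measurable_fst)]
      rfl
    | succ n ih =>
      funext y
      rw [Function.iterate_succ_apply', ih]
      have hSm : MeasurableSet {p : ℝ × ℝ | p.1 ≤ y} :=
        measurableSet_le measurable_fst measurable_const
      have hgm : Measurable fun p : ℝ × ℝ =>
          ((Measure.pi (fun _ : Fin (n + 1) => μ)) (Bset n (y - p.2))).toReal :=
        ((measurable_piBset μ n).comp (measurable_const.sub measurable_snd)).ennreal_toReal
      have step1 : perturbT P (ξ 0) (X 1)
            (fun z => ((Measure.pi (fun _ : Fin (n + 1) => μ)) (Bset n z)).toReal) y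
          = ∫ p in {p : ℝ × ℝ | p.1 ≤ y},
              ((Measure.pi (fun _ : Fin (n + 1) => μ)) (Bset n (y - p.2))).toReal ∂μ := by
        rw [hμdef]
        rw [setIntegral_map hSm hgm.aestronglyMeasurable (hZm 0).aemeasurable]
        rfl
      rw [step1]
      have step2 : ∫ p in {p : ℝ × ℝ | p.1 ≤ y},
            ((Measure.pi (fun _ : Fin (n + 1) => μ)) (Bset n (y - p.2))).toReal ∂μ
          = (∫⁻ p in {p : ℝ × ℝ | p.1 ≤ y},
              (Measure.pi (fun _ : Fin (n + 1) => μ)) (Bset n (y - p.2)) ∂μ).toReal := by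
        refine integral_toReal ?_ ?_
        · exact ((measurable_piBset μ n).comp (measurable_const.sub measurable_snd)).aemeasurable
        · exact Filter.Eventually.of_forall fun p => measure_lt_top _ _
      rw [step2, ← pi_Bset_succ μ n y]
  -- decomposition of the event by first exceedance time
  set D : ℕ → Set Ω := fun n => {ω |
      (∀ j < n, (∑ i ∈ Finset.range j, X (i + 1) ω) + ξ j ω ≤ x) ∧
        x < (∑ i ∈ Finset.range n, X (i + 1) ω) + ξ n ω} with hDdef
  have hSmeas : ∀ k, Measurable fun ω => (∑ i ∈ Finset.range k, X (i + 1) ω) + ξ k ω :=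
    fun k => (Finset.measurable_sum _ (fun i _ => hXmeas (i + 1))).add (hξmeas k)
  have hDmeas : ∀ n, MeasurableSet (D n) := by
    intro n
    have h : D n = (⋂ j, ⋂ (_ : j < n),
        {ω | (∑ i ∈ Finset.range j, X (i + 1) ω) + ξ j ω ≤ x})
        ∩ {ω | x < (∑ i ∈ Finset.range n, X (i + 1) ω) + ξ n ω} := by
      ext ω; simp [hDdef]
    rw [h]
    exact (MeasurableSet.iInter fun j => MeasurableSet.iInter fun _ =>
        measurableSet_le (hSmeas j) measurable_const).inter
      (measurableSet_lt measurable_const (hSmeas n))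
  have hUnion : {ω | ∃ k : ℕ, (∑ i ∈ Finset.range k, X (i + 1) ω) + ξ k ω > x}
      = ⋃ n, D n := by
    ext ω
    simp only [Set.mem_setOf_eq, Set.mem_iUnion, hDdef]
    constructor
    · intro h
      refine ⟨Nat.find h, fun j hj => not_lt.mp (Nat.find_min h hj), Nat.find_spec h⟩
    · rintro ⟨n, _, h2⟩
      exact ⟨n, h2⟩
  have hdisj : Pairwise (Function.onFun Disjoint D) := by
    intro m n hmn
    rw [Function.onFun, Set.disjoint_left]
    intro ω hm hn
    rcases lt_or_gt_of_ne hmn with h | h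
    · exact absurd hm.2 (not_lt.mpr (hn.1 m h))
    · exact absurd hn.2 (not_lt.mpr (hm.1 n h))
  rw [hUnion, measure_iUnion hdisj hDmeas,
    ENNReal.tsum_toReal_eq (fun n => measure_ne_top P _)]
  refine tsum_congr fun n => ?_
  rw [hiter n]
  have hDB : D n = (fun ω (j : Fin (n + 1)) => Z j ω) ⁻¹' Bset n x := by
    ext ω
    rw [Set.mem_preimage]
    have := mem_Bset n x (fun i => Z i ω)
    rw [show ((fun j : Fin (n + 1) => Z j ω) ∈ Bset n x)
        ↔ ((fun j : Fin (n + 1) => (fun i => Z i ω) j) ∈ Bset n x) from Iff.rfl, this]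
    simp [hDdef, hZdef]
  have hV : Measurable fun ω (j : Fin (n + 1)) => Z j ω :=
    measurable_pi_lambda _ fun j => hZm j
  rw [hDB, ← Measure.map_apply hV (measurableSet_Bset n x), hlaw n]
end

section
/- Suppose (ξ_j) is stationary, independent of the random walk (S_n), with E[exp(θ* ξ_0)] < ∞, and suppose the Cramér–Lundberg asymptotic P(max_{n≥0} S_n > x) ~ r e^{-θ* x} holds as x → ∞ with r, θ* > 0. Then liminf_{x→∞} e^{θ* x} P(M_∞ > x) ≥ r · E[exp(θ* ξ_0)], where M_∞ = sup_{k≥0}(S_k + ξ_k). -/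
open MeasureTheory ProbabilityTheory Filter Set
open scoped ENNReal NNReal

namespace PRW

variable {Ω : Type*} [MeasurableSpace Ω]

lemma pow_le_one_of_bounded {a c : ℝ} (ha : 0 ≤ a) (h : ∀ n : ℕ, a ^ n ≤ c) : a ≤ 1 := by
  by_contra hlt
  push_neg at hlt
  obtain ⟨n, hn⟩ := pow_unbounded_of_one_lt c hlt
  exact absurd (h n) (not_le.mpr hn)

lemma lintegral_exp_le_layer (P : Measure Ω) [IsProbabilityMeasure P] {f : Ω → ℝ}
    (hf : Measurable f) {t : ℝ} (ht : 0 ≤ t) :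
    ∫⁻ ω, ENNReal.ofReal (Real.exp (t * f ω)) ∂P
      ≤ 1 + ∑' j : ℕ, ENNReal.ofReal (Real.exp (t * (j + 1))) * P {ω | (j : ℝ) ≤ f ω} := by
  have hms : ∀ j : ℕ, MeasurableSet {ω | (j : ℝ) ≤ f ω} := fun j =>
    measurableSet_le measurable_const hf
  have hpt : ∀ ω, ENNReal.ofReal (Real.exp (t * f ω)) ≤
      1 + ∑' j : ℕ, ENNReal.ofReal (Real.exp (t * (j + 1))) *
        ({ω | (j : ℝ) ≤ f ω}.indicator (fun _ => (1 : ℝ≥0∞)) ω) := by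
    intro ω
    rcases le_or_gt 0 (f ω) with h0 | h0
    · have h1 : ((⌊f ω⌋₊ : ℝ)) ≤ f ω := Nat.floor_le h0
      have h2 : f ω < (⌊f ω⌋₊ : ℝ) + 1 := Nat.lt_floor_add_one _
      have hterm : ENNReal.ofReal (Real.exp (t * f ω)) ≤
          ENNReal.ofReal (Real.exp (t * ((⌊f ω⌋₊ : ℕ) + 1))) *
            ({ω | ((⌊f ω⌋₊ : ℕ) : ℝ) ≤ f ω}.indicator (fun _ => (1 : ℝ≥0∞)) ω) := by
        rw [Set.indicator_of_mem (by exact h1), mul_one]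
        exact ENNReal.ofReal_le_ofReal (Real.exp_le_exp.mpr (by nlinarith))
      refine hterm.trans ?_
      exact le_add_left (ENNReal.le_tsum _)
    · have h1 : Real.exp (t * f ω) ≤ 1 := by
        rw [Real.exp_le_one_iff]
        exact mul_nonpos_of_nonneg_of_nonpos ht h0.le
      refine le_trans ?_ le_self_add
      simpa using ENNReal.ofReal_le_one.mpr h1
  refine (lintegral_mono hpt).trans ?_
  rw [lintegral_add_left measurable_const]
  simp only [lintegral_const, one_mul, measure_univ, mul_one]
  gcongr
  rw [lintegral_tsum (fun j => ((measurable_const.indicator (hms j)).const_mul _).aemeasurable)]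
  refine Summable.tsum_le_tsum (fun j => ?_) ENNReal.summable ENNReal.summable
  rw [lintegral_const_mul _ (measurable_const.indicator (hms j))]
  gcongr
  rw [lintegral_indicator (hms j)]
  simp

lemma geom_tail_sum {t θ C : ℝ} (htθ : t < θ) (hC : 0 ≤ C) :
    ∑' j : ℕ, ENNReal.ofReal (Real.exp (t * (j + 1))) * ENNReal.ofReal (C * Real.exp (-θ * j))
      = ENNReal.ofReal (C * Real.exp t) * (1 - ENNReal.ofReal (Real.exp (t - θ)))⁻¹ := by
  have h1 : ∀ j : ℕ, ENNReal.ofReal (Real.exp (t * (j + 1))) *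
      ENNReal.ofReal (C * Real.exp (-θ * j))
      = ENNReal.ofReal (C * Real.exp t) * (ENNReal.ofReal (Real.exp (t - θ))) ^ j := by
    intro j
    rw [← ENNReal.ofReal_pow (Real.exp_nonneg _), ← Real.exp_nat_mul,
      ← ENNReal.ofReal_mul (Real.exp_nonneg _), ← ENNReal.ofReal_mul (by positivity)]
    congr 1
    rw [mul_comm (Real.exp (t * (j + 1))), mul_assoc, ← Real.exp_add, mul_assoc,
      ← Real.exp_add]
    congr 2
    ring
  simp_rw [h1]
  rw [ENNReal.tsum_mul_left, ENNReal.tsum_geometric]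

lemma geom_ne_top {t θ : ℝ} (htθ : t < θ) :
    (1 - ENNReal.ofReal (Real.exp (t - θ)))⁻¹ ≠ ∞ := by
  rw [ENNReal.inv_ne_top, ne_eq, tsub_eq_zero_iff_le, not_le]
  exact ENNReal.ofReal_lt_one.mpr (Real.exp_lt_one_iff.mpr (by linarith))

lemma lintegral_exp_le_of_tail (P : Measure Ω) [IsProbabilityMeasure P] {f : Ω → ℝ}
    (hf : Measurable f) {θ C t : ℝ} (ht : 0 ≤ t) (htθ : t < θ) (hC : 0 ≤ C)
    (htail : ∀ j : ℕ, P {ω | (j : ℝ) ≤ f ω} ≤ ENNReal.ofReal (C * Real.exp (-θ * j))) :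
    ∫⁻ ω, ENNReal.ofReal (Real.exp (t * f ω)) ∂P
      ≤ 1 + ENNReal.ofReal (C * Real.exp t) * (1 - ENNReal.ofReal (Real.exp (t - θ)))⁻¹ := by
  refine (lintegral_exp_le_layer P hf ht).trans ?_
  gcongr
  rw [← geom_tail_sum htθ hC]
  exact Summable.tsum_le_tsum (fun j => mul_le_mul_right (htail j) _)
    ENNReal.summable ENNReal.summable

lemma integrable_exp_of_tail (P : Measure Ω) [IsProbabilityMeasure P] {f : Ω → ℝ}
    (hf : Measurable f) {θ C t : ℝ} (ht : 0 ≤ t) (htθ : t < θ) (hC : 0 ≤ C)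
    (htail : ∀ j : ℕ, P {ω | (j : ℝ) ≤ f ω} ≤ ENNReal.ofReal (C * Real.exp (-θ * j))) :
    Integrable (fun ω => Real.exp (t * f ω)) P := by
  refine ⟨(((hf.const_mul t).exp)).aestronglyMeasurable, ?_⟩
  rw [hasFiniteIntegral_iff_ofReal (Filter.Eventually.of_forall fun ω => (Real.exp_pos _).le)]
  refine lt_of_le_of_lt (lintegral_exp_le_of_tail P hf ht htθ hC htail) ?_
  exact ENNReal.add_lt_top.mpr ⟨ENNReal.one_lt_top,
    ENNReal.mul_lt_top ENNReal.ofReal_lt_top (Ne.lt_top (geom_ne_top htθ))⟩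

lemma tail_shift (P : Measure Ω) (X : ℕ → Ω → ℝ) {θ C : ℝ}
    (htail : ∀ v : ℝ, P {ω | ∃ n, (∑ i ∈ Finset.range n, X i ω) > v}
      ≤ ENNReal.ofReal (C * Real.exp (-θ * v))) (k : ℕ) :
    ∀ j : ℕ, P {ω | (j : ℝ) ≤ (∑ i ∈ Finset.range k, X i ω)}
      ≤ ENNReal.ofReal (C * Real.exp θ * Real.exp (-θ * j)) := by
  intro j
  have hsub : {ω | (j : ℝ) ≤ (∑ i ∈ Finset.range k, X i ω)}
      ⊆ {ω | ∃ n, (∑ i ∈ Finset.range n, X i ω) > (j : ℝ) - 1} := by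
    intro ω hω
    exact ⟨k, by simp only [Set.mem_setOf_eq] at hω ⊢; linarith⟩
  refine (measure_mono hsub).trans ((htail _).trans (le_of_eq ?_))
  congr 1
  rw [mul_assoc, ← Real.exp_add]
  congr 2
  ring

lemma ident_exp_integrable (P : Measure Ω) [IsProbabilityMeasure P] (X : ℕ → Ω → ℝ)
    (hident : ∀ i, IdentDistrib (X i) (X 0) P P) {t : ℝ}
    (h0 : Integrable (fun ω => Real.exp (t * X 0 ω)) P) (i : ℕ) :
    Integrable (fun ω => Real.exp (t * X i ω)) P :=
  (((hident i).comp (measurable_const_mul t).exp).integrable_iff).mpr h0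

lemma ident_mgf_eq (P : Measure Ω) [IsProbabilityMeasure P] (X : ℕ → Ω → ℝ)
    (hident : ∀ i, IdentDistrib (X i) (X 0) P P) (t : ℝ) (i : ℕ) :
    mgf (X i) P t = mgf (X 0) P t :=
  ((hident i).comp (measurable_const_mul t).exp).integral_eq

lemma mgf_sum_pow (P : Measure Ω) [IsProbabilityMeasure P] (X : ℕ → Ω → ℝ)
    (hXmeas : ∀ i, Measurable (X i))
    (hindep : iIndepFun X P)
    (hident : ∀ i, IdentDistrib (X i) (X 0) P P) (t : ℝ) (k : ℕ) :
    mgf (∑ i ∈ Finset.range k, X i) P t = (mgf (X 0) P t) ^ k := by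
  rw [hindep.mgf_sum hXmeas]
  rw [Finset.prod_congr rfl (fun i _ => ident_mgf_eq P X hident t i)]
  simp [Finset.prod_const, Finset.card_range]

lemma mgf_Ico_pow (P : Measure Ω) [IsProbabilityMeasure P] (X : ℕ → Ω → ℝ)
    (hXmeas : ∀ i, Measurable (X i))
    (hindep : iIndepFun X P)
    (hident : ∀ i, IdentDistrib (X i) (X 0) P P) (t : ℝ) (n k : ℕ) :
    mgf (∑ i ∈ Finset.Ico n k, X i) P t = (mgf (X 0) P t) ^ (k - n) := by
  rw [hindep.mgf_sum hXmeas]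
  rw [Finset.prod_congr rfl (fun i _ => ident_mgf_eq P X hident t i)]
  simp [Finset.prod_const, Nat.card_Ico]

lemma mgf_le_one (P : Measure Ω) [IsProbabilityMeasure P] (X : ℕ → Ω → ℝ)
    (hXmeas : ∀ i, Measurable (X i))
    (hindep : iIndepFun X P)
    (hident : ∀ i, IdentDistrib (X i) (X 0) P P)
    {θ C : ℝ} (hθ : 0 < θ) (hC : 0 ≤ C)
    (htail : ∀ v : ℝ, P {ω | ∃ n, (∑ i ∈ Finset.range n, X i ω) > v}
      ≤ ENNReal.ofReal (C * Real.exp (-θ * v)))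
    {t : ℝ} (ht : 0 ≤ t) (htθ : t < θ) : mgf (X 0) P t ≤ 1 := by
  have hC' : (0:ℝ) ≤ C * Real.exp θ := by positivity
  set c : ℝ≥0∞ := 1 + ENNReal.ofReal (C * Real.exp θ * Real.exp t) *
    (1 - ENNReal.ofReal (Real.exp (t - θ)))⁻¹ with hc
  have hcne : c ≠ ∞ := by
    rw [hc]
    exact ENNReal.add_ne_top.mpr ⟨ENNReal.one_ne_top,
      ENNReal.mul_ne_top ENNReal.ofReal_ne_top (geom_ne_top htθ)⟩
  have hb : ∀ k : ℕ, mgf (∑ i ∈ Finset.range k, X i) P t ≤ c.toReal := by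
    intro k
    have hSmeas : Measurable (fun ω => ∑ i ∈ Finset.range k, X i ω) :=
      Finset.measurable_sum _ (fun i _ => hXmeas i)
    have hub := lintegral_exp_le_of_tail P hSmeas ht htθ hC' (tail_shift P X htail k)
    have hmgf : mgf (∑ i ∈ Finset.range k, X i) P t
        = (∫⁻ ω, ENNReal.ofReal (Real.exp (t * (∑ i ∈ Finset.range k, X i ω))) ∂P).toReal := by
      have hfe : (fun ω => Real.exp (t * (∑ i ∈ Finset.range k, X i) ω))
          = fun ω => Real.exp (t * ∑ i ∈ Finset.range k, X i ω) := by
        funext ω; simp [Finset.sum_apply]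
      rw [mgf, hfe, integral_eq_lintegral_of_nonneg_ae (Filter.Eventually.of_forall
        (fun ω => (Real.exp_pos _).le)) (((hSmeas.const_mul t).exp).aestronglyMeasurable)]
    rw [hmgf]
    exact ENNReal.toReal_mono hcne hub
  refine pow_le_one_of_bounded (c := c.toReal) mgf_nonneg (fun n => ?_)
  rw [← mgf_sum_pow P X hXmeas hindep hident t n]
  exact hb n

lemma degenerate_or_mgf_lt_one (P : Measure Ω) [IsProbabilityMeasure P] (X : ℕ → Ω → ℝ)
    (hXmeas : ∀ i, Measurable (X i))
    (hindep : iIndepFun X P)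
    (hident : ∀ i, IdentDistrib (X i) (X 0) P P)
    {θ C : ℝ} (hθ : 0 < θ) (hC : 0 ≤ C)
    (htail : ∀ v : ℝ, P {ω | ∃ n, (∑ i ∈ Finset.range n, X i ω) > v}
      ≤ ENNReal.ofReal (C * Real.exp (-θ * v))) :
    mgf (X 0) P (θ/4) < 1 ∨ (∀ᵐ ω ∂P, X 0 ω = 0) := by
  have h1 : mgf (X 0) P (θ/4) ≤ 1 :=
    mgf_le_one P X hXmeas hindep hident hθ hC htail (by linarith) (by linarith)
  have h2 : mgf (X 0) P (θ/2) ≤ 1 :=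
    mgf_le_one P X hXmeas hindep hident hθ hC htail (by linarith) (by linarith)
  rcases lt_or_eq_of_le h1 with h | h
  · exact Or.inl h
  right
  have htail0 : ∀ j : ℕ, P {ω | (j : ℝ) ≤ X 0 ω}
      ≤ ENNReal.ofReal (C * Real.exp θ * Real.exp (-θ * j)) := by
    intro j
    have := tail_shift P X htail 1 j
    simpa [Finset.sum_range_one] using this
  have hC' : (0:ℝ) ≤ C * Real.exp θ := by positivity
  have hint4 : Integrable (fun ω => Real.exp ((θ/4) * X 0 ω)) P :=
    integrable_exp_of_tail P (hXmeas 0) (by linarith) (by linarith) hC' htail0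
  have hint2 : Integrable (fun ω => Real.exp ((θ/2) * X 0 ω)) P :=
    integrable_exp_of_tail P (hXmeas 0) (by linarith) (by linarith) hC' htail0
  have hYsq : ∀ ω : Ω, (Real.exp ((θ/4) * X 0 ω) - 1)^2
      = Real.exp ((θ/2) * X 0 ω) - 2 * Real.exp ((θ/4) * X 0 ω) + 1 := by
    intro ω
    have hsq : Real.exp ((θ/4) * X 0 ω) ^ 2 = Real.exp ((θ/2) * X 0 ω) := by
      rw [← Real.exp_nat_mul]
      congr 1
      ring
    nlinarith [hsq]
  have hEY : ∫ ω, Real.exp ((θ/4) * X 0 ω) ∂P = 1 := by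
    rw [← h]; rfl
  have hEY2 : ∫ ω, Real.exp ((θ/2) * X 0 ω) ∂P ≤ 1 := h2
  have hint_f : Integrable (fun ω => Real.exp ((θ/2) * X 0 ω)
      - 2 * Real.exp ((θ/4) * X 0 ω)) P := hint2.sub (hint4.const_mul 2)
  have hint_sq : Integrable (fun ω => (Real.exp ((θ/4) * X 0 ω) - 1)^2) P := by
    have heq : (fun ω => (Real.exp ((θ/4) * X 0 ω) - 1)^2)
        = fun ω => (Real.exp ((θ/2) * X 0 ω) - 2 * Real.exp ((θ/4) * X 0 ω)) + 1 := by
      funext ω; rw [hYsq ω]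
    rw [heq]
    exact hint_f.add (integrable_const 1)
  have hE0' : ∫ ω, (Real.exp ((θ/4) * X 0 ω) - 1)^2 ∂P = 0 := by
    refine le_antisymm ?_ (integral_nonneg (fun ω => sq_nonneg _))
    have heq : ∫ ω, (Real.exp ((θ/4) * X 0 ω) - 1)^2 ∂P
        = ∫ ω, ((Real.exp ((θ/2) * X 0 ω) - 2 * Real.exp ((θ/4) * X 0 ω)) + 1) ∂P := by
      exact integral_congr_ae (Filter.Eventually.of_forall (fun ω => hYsq ω))
    rw [heq, integral_add hint_f (integrable_const 1),
      integral_sub hint2 (hint4.const_mul 2), integral_const_mul, hEY]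
    simp only [integral_const, measure_univ, probReal_univ, ENNReal.toReal_one, smul_eq_mul, one_mul]
    linarith
  have hae := (integral_eq_zero_iff_of_nonneg
    (fun ω => sq_nonneg (Real.exp ((θ/4) * X 0 ω) - 1)) hint_sq).mp hE0'
  filter_upwards [hae] with ω hω
  have hY1 : Real.exp ((θ/4) * X 0 ω) = 1 := by
    have : (Real.exp ((θ/4) * X 0 ω) - 1)^2 = 0 := hω
    nlinarith [this]
  have : (θ/4) * X 0 ω = 0 := by
    have := Real.exp_eq_exp.mp (by rw [hY1, Real.exp_zero] : Real.exp ((θ/4) * X 0 ω) = Real.exp 0)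
    exact this
  have hθ4 : θ/4 ≠ 0 := by positivity
  exact (mul_eq_zero.mp this).resolve_left hθ4

lemma occupation (P : Measure Ω) [IsProbabilityMeasure P] (X : ℕ → Ω → ℝ)
    (hXmeas : ∀ i, Measurable (X i))
    (hindep : iIndepFun X P)
    (hident : ∀ i, IdentDistrib (X i) (X 0) P P)
    {θ C : ℝ} (hθ : 0 < θ) (hC : 0 ≤ C)
    (htail : ∀ v : ℝ, P {ω | ∃ n, (∑ i ∈ Finset.range n, X i ω) > v}
      ≤ ENNReal.ofReal (C * Real.exp (-θ * v)))
    (hint0 : Integrable (fun ω => Real.exp ((θ/4) * X 0 ω)) P)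
    (hρ : mgf (X 0) P (θ/4) < 1) :
    ∃ D : ℝ≥0∞, D ≠ ∞ ∧ ∀ v : ℝ, ∑' k : ℕ, P {ω | (∑ i ∈ Finset.range k, X i ω) > v}
      ≤ D * ENNReal.ofReal (Real.exp (-θ * v)) := by
  classical
  set t₀ : ℝ := θ/4 with ht₀def
  have ht₀ : 0 < t₀ := by positivity
  have ht₀θ : t₀ < θ := by rw [ht₀def]; linarith
  set ρ : ℝ := mgf (X 0) P t₀ with hρdef
  have hρ0 : 0 ≤ ρ := mgf_nonneg
  set ρ' : ℝ≥0∞ := ENNReal.ofReal ρ with hρ'def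
  have hρ'1 : ρ' < 1 := ENNReal.ofReal_lt_one.mpr hρ
  have hgeom' : (1 - ρ')⁻¹ ≠ ∞ := by
    rw [ENNReal.inv_ne_top, ne_eq, tsub_eq_zero_iff_le, not_le]
    exact hρ'1
  have hSmeas : ∀ k, Measurable (fun ω => ∑ i ∈ Finset.range k, X i ω) := fun k =>
    Finset.measurable_sum _ (fun i _ => hXmeas i)
  refine ⟨ENNReal.ofReal (C * Real.exp (t₀ + θ)) *
    (1 - ENNReal.ofReal (Real.exp (t₀ - θ)))⁻¹ * (1 - ρ')⁻¹, ?_, ?_⟩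
  · exact ENNReal.mul_ne_top (ENNReal.mul_ne_top ENNReal.ofReal_ne_top
      (geom_ne_top ht₀θ)) hgeom'
  intro v
  -- first passage sets
  set A : ℕ → Set Ω := fun n => {ω | v < ∑ i ∈ Finset.range n, X i ω} ∩
    (⋂ m, ⋂ (_ : m < n), {ω | (∑ i ∈ Finset.range m, X i ω) ≤ v}) with hA
  have hAmeas : ∀ n, MeasurableSet (A n) := by
    intro n
    refine (measurableSet_lt measurable_const (hSmeas n)).inter ?_
    exact MeasurableSet.iInter (fun m => MeasurableSet.iInter (fun _ =>
      measurableSet_le (hSmeas m) measurable_const))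
  have hAmem : ∀ n ω, ω ∈ A n ↔ (v < ∑ i ∈ Finset.range n, X i ω ∧
      ∀ m, m < n → (∑ i ∈ Finset.range m, X i ω) ≤ v) := by
    intro n ω
    simp [hA, Set.mem_iInter]
  have hAdisj : Pairwise (Function.onFun Disjoint A) := by
    have key : ∀ a b, a < b → Disjoint (A a) (A b) := by
      intro a b hab
      rw [Set.disjoint_left]
      intro ω ha hb
      exact absurd ((hAmem a ω).mp ha).1 (not_lt.mpr (((hAmem b ω).mp hb).2 a hab))
    intro a b hab
    rcases hab.lt_or_gt with h | h
    · exact key a b h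
    · exact (key b a h).symm
  -- the weights
  set Λ : ℕ → ℝ≥0∞ := fun n => ∫⁻ ω, (A n).indicator
    (fun ω => ENNReal.ofReal (Real.exp (t₀ * ((∑ i ∈ Finset.range n, X i ω) - v)))) ω ∂P
    with hΛ
  -- ### Step 1 : per-k bound
  have hstep1 : ∀ k, P {ω | (∑ i ∈ Finset.range k, X i ω) > v}
      ≤ ∑ n ∈ Finset.range (k+1), Λ n * ρ' ^ (k - n) := by
    intro k
    have hcover : {ω | (∑ i ∈ Finset.range k, X i ω) > v}
        ⊆ ⋃ n ∈ Finset.range (k+1), (A n ∩ {ω | v < ∑ i ∈ Finset.range k, X i ω}) := by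
      intro ω hω
      have hex : ∃ n, v < ∑ i ∈ Finset.range n, X i ω := ⟨k, hω⟩
      have hn₀k : Nat.find hex ≤ k := Nat.find_min' hex hω
      refine Set.mem_biUnion (Finset.mem_range.mpr (Nat.lt_succ_of_le hn₀k)) ?_
      exact ⟨(hAmem _ ω).mpr ⟨Nat.find_spec hex,
        fun m hm => not_lt.mp (Nat.find_min hex hm)⟩, hω⟩
    refine (measure_mono hcover).trans ((measure_biUnion_finset_le _ _).trans ?_)
    refine Finset.sum_le_sum (fun n hn => ?_)
    have hnk : n ≤ k := Nat.lt_succ_iff.mp (Finset.mem_range.mp hn)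
    -- two factors
    set F : Ω → ℝ≥0∞ := (A n).indicator
      (fun ω => ENNReal.ofReal (Real.exp (t₀ * ((∑ i ∈ Finset.range n, X i ω) - v)))) with hF
    set G : Ω → ℝ≥0∞ := fun ω =>
      ENNReal.ofReal (Real.exp (t₀ * (∑ i ∈ Finset.Ico n k, X i ω))) with hG
    have hFmeas : Measurable F := by
      refine Measurable.indicator ?_ (hAmeas n)
      exact (((hSmeas n).sub measurable_const).const_mul t₀).exp.ennreal_ofReal
    have hGmeas : Measurable G := by
      have : Measurable (fun ω => ∑ i ∈ Finset.Ico n k, X i ω) :=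
        Finset.measurable_sum _ (fun i _ => hXmeas i)
      exact ((this.const_mul t₀).exp).ennreal_ofReal
    -- pointwise domination
    have hpoint : ∀ ω, (A n ∩ {ω | v < ∑ i ∈ Finset.range k, X i ω}).indicator
        (fun _ => (1:ℝ≥0∞)) ω ≤ F ω * G ω := by
      intro ω
      by_cases hmem : ω ∈ A n ∩ {ω | v < ∑ i ∈ Finset.range k, X i ω}
      · rw [Set.indicator_of_mem hmem, hF, Set.indicator_of_mem hmem.1, hG,
          ← ENNReal.ofReal_mul (Real.exp_nonneg _), ← Real.exp_add]
        rw [show (1:ℝ≥0∞) = ENNReal.ofReal 1 by simp]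
        refine ENNReal.ofReal_le_ofReal ?_
        rw [← Real.exp_zero]
        refine Real.exp_le_exp.mpr ?_
        have hsum : (∑ i ∈ Finset.range n, X i ω) + ∑ i ∈ Finset.Ico n k, X i ω
            = ∑ i ∈ Finset.range k, X i ω := by
          rw [Finset.range_eq_Ico, Finset.range_eq_Ico]
          exact Finset.sum_Ico_consecutive (fun i => X i ω) (Nat.zero_le n) hnk
        have hv : v < ∑ i ∈ Finset.range k, X i ω := hmem.2
        nlinarith [hv, hsum, ht₀]
      · rw [Set.indicator_of_notMem hmem]
        exact zero_le
    have hPB : P (A n ∩ {ω | v < ∑ i ∈ Finset.range k, X i ω})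
        ≤ ∫⁻ ω, F ω * G ω ∂P := by
      have hmsB : MeasurableSet (A n ∩ {ω | v < ∑ i ∈ Finset.range k, X i ω}) :=
        (hAmeas n).inter (measurableSet_lt measurable_const (hSmeas k))
      rw [← lintegral_indicator_one hmsB]
      exact lintegral_mono hpoint
    -- independence of the two factors
    have hdisjNK : Disjoint (Finset.range n) (Finset.Ico n k) := by
      rw [Finset.disjoint_left]
      intro i hi hi'
      rw [Finset.mem_range] at hi
      rw [Finset.mem_Ico] at hi'
      omega
    have hbase := hindep.indepFun_finset (Finset.range n) (Finset.Ico n k) hdisjNK hXmeas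
    -- prefix functional
    set T : ℕ → ({x // x ∈ Finset.range n} → ℝ) → ℝ := fun m g =>
      ∑ i ∈ (Finset.range n).attach, if (i : ℕ) < m then g i else 0 with hT
    have hTmeas : ∀ m, Measurable (T m) := by
      intro m
      refine Finset.measurable_sum _ (fun i _ => ?_)
      by_cases h : (i : ℕ) < m
      · simpa [h] using measurable_pi_apply i
      · simpa [h] using (measurable_const : Measurable (fun _ :
          ({x // x ∈ Finset.range n} → ℝ) => (0:ℝ)))
    have hTX : ∀ (ω : Ω) (m : ℕ), m ≤ n →
        T m (fun i => X (i : ℕ) ω) = ∑ i ∈ Finset.range m, X i ω := by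
      intro ω m hm
      have h1 : ∑ i ∈ (Finset.range n).attach,
          (if ((i : ℕ)) < m then X (i:ℕ) ω else 0)
          = ∑ i ∈ Finset.range n, (if i < m then X i ω else 0) :=
        Finset.sum_attach (Finset.range n) (fun j => if j < m then X j ω else 0)
      show (∑ i ∈ (Finset.range n).attach, if ((i : ℕ)) < m then X (i:ℕ) ω else 0)
          = ∑ i ∈ Finset.range m, X i ω
      rw [h1, Finset.sum_ite, Finset.sum_const_zero, add_zero]
      congr 1
      ext i
      simp only [Finset.mem_filter, Finset.mem_range]
      omega
    set Es : Set ({x // x ∈ Finset.range n} → ℝ) := {g | v < T n g} ∩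
      (⋂ m, ⋂ (_ : m < n), {g | T m g ≤ v}) with hEs
    have hEsmeas : MeasurableSet Es := by
      refine (measurableSet_lt measurable_const (hTmeas n)).inter ?_
      exact MeasurableSet.iInter (fun m => MeasurableSet.iInter (fun _ =>
        measurableSet_le (hTmeas m) measurable_const))
    have hEsmem : ∀ ω, ((fun i : {x // x ∈ Finset.range n} => X (i:ℕ) ω) ∈ Es) ↔ ω ∈ A n := by
      intro ω
      constructor
      · intro hg
        refine (hAmem n ω).mpr ⟨?_, ?_⟩
        · have := hg.1
          rwa [Set.mem_setOf_eq, hTX ω n le_rfl] at this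
        · intro m hm
          have := Set.mem_iInter.mp (Set.mem_iInter.mp hg.2 m) hm
          rwa [Set.mem_setOf_eq, hTX ω m hm.le] at this
      · intro hω
        have hω' := (hAmem n ω).mp hω
        refine ⟨?_, ?_⟩
        · rw [Set.mem_setOf_eq, hTX ω n le_rfl]; exact hω'.1
        · refine Set.mem_iInter.mpr (fun m => Set.mem_iInter.mpr (fun hm => ?_))
          rw [Set.mem_setOf_eq, hTX ω m hm.le]; exact hω'.2 m hm
    set φ : ({x // x ∈ Finset.range n} → ℝ) → ℝ≥0∞ := fun g =>
      Es.indicator (fun g => ENNReal.ofReal (Real.exp (t₀ * (T n g - v)))) g with hφ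
    have hφmeas : Measurable φ :=
      Measurable.indicator ((((hTmeas n).sub measurable_const).const_mul t₀).exp.ennreal_ofReal)
        hEsmeas
    set ψ : ({x // x ∈ Finset.Ico n k} → ℝ) → ℝ≥0∞ := fun g =>
      ENNReal.ofReal (Real.exp (t₀ * ∑ i ∈ (Finset.Ico n k).attach, g i)) with hψ
    have hψmeas : Measurable ψ := by
      have : Measurable (fun g : ({x // x ∈ Finset.Ico n k} → ℝ) =>
          ∑ i ∈ (Finset.Ico n k).attach, g i) :=
        Finset.measurable_sum _ (fun i _ => measurable_pi_apply i)
      exact ((this.const_mul t₀).exp).ennreal_ofReal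
    have hcomp := hbase.comp hφmeas hψmeas
    have hφX : (φ ∘ (fun ω (i : {x // x ∈ Finset.range n}) => X (i:ℕ) ω)) = F := by
      funext ω
      simp only [Function.comp_apply, hφ, hF]
      by_cases hω : ω ∈ A n
      · rw [Set.indicator_of_mem ((hEsmem ω).mpr hω), Set.indicator_of_mem hω,
          hTX ω n le_rfl]
      · rw [Set.indicator_of_notMem (fun hmem => hω ((hEsmem ω).mp hmem)),
          Set.indicator_of_notMem hω]
    have hψX : (ψ ∘ (fun ω (i : {x // x ∈ Finset.Ico n k}) => X (i:ℕ) ω)) = G := by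
      funext ω
      simp only [Function.comp_apply, hψ, hG]
      rw [Finset.sum_attach (Finset.Ico n k) (fun j => X j ω)]
    have hFG : IndepFun F G P := by
      rw [← hφX, ← hψX]
      exact hcomp
    -- mgf of the increment block
    have hintIco : Integrable (fun ω => Real.exp (t₀ * (∑ i ∈ Finset.Ico n k, X i) ω)) P := by
      refine hindep.integrable_exp_mul_sum hXmeas (fun i _ => ?_)
      exact ident_exp_integrable P X hident hint0 i
    have hGval : ∫⁻ ω, G ω ∂P = ρ' ^ (k - n) := by
      have h1 := ofReal_integral_eq_lintegral_ofReal hintIco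
        (Filter.Eventually.of_forall (fun ω => (Real.exp_pos _).le))
      simp only [Finset.sum_apply] at h1
      rw [hG, ← h1]
      have h2 : ∫ ω, Real.exp (t₀ * (∑ i ∈ Finset.Ico n k, X i) ω) ∂P
          = mgf (∑ i ∈ Finset.Ico n k, X i) P t₀ := rfl
      simp only [Finset.sum_apply] at h2
      rw [h2, mgf_Ico_pow P X hXmeas hindep hident t₀ n k, ENNReal.ofReal_pow hρ0]
    calc P (A n ∩ {ω | v < ∑ i ∈ Finset.range k, X i ω})
        ≤ ∫⁻ ω, F ω * G ω ∂P := hPB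
      _ = (∫⁻ ω, F ω ∂P) * ∫⁻ ω, G ω ∂P := by
          have := lintegral_mul_eq_lintegral_mul_lintegral_of_indepFun hFmeas hGmeas hFG
          simpa [Pi.mul_apply] using this
      _ = Λ n * ρ' ^ (k - n) := by rw [hGval]
  -- ### Step 2 : sum over k
  have hstep2 : ∑' k : ℕ, P {ω | (∑ i ∈ Finset.range k, X i ω) > v}
      ≤ (∑' n, Λ n) * (1 - ρ')⁻¹ := by
    have hsum1 : ∀ k, (∑ n ∈ Finset.range (k+1), Λ n * ρ' ^ (k-n))
        = ∑' n : ℕ, (if n ≤ k then Λ n * ρ' ^ (k-n) else 0) := by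
      intro k
      rw [tsum_eq_sum (s := Finset.range (k+1)) (f := fun n => if n ≤ k then Λ n * ρ' ^ (k-n) else 0)
        (fun n hn => if_neg (fun h => hn (Finset.mem_range.mpr (Nat.lt_succ_of_le h))))]
      refine Finset.sum_congr rfl (fun n hn => ?_)
      rw [if_pos (Nat.lt_succ_iff.mp (Finset.mem_range.mp hn))]
    calc ∑' k : ℕ, P {ω | (∑ i ∈ Finset.range k, X i ω) > v}
        ≤ ∑' k : ℕ, ∑' n : ℕ, (if n ≤ k then Λ n * ρ' ^ (k-n) else 0) :=
          Summable.tsum_le_tsum (fun k => (hstep1 k).trans (le_of_eq (hsum1 k)))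
            ENNReal.summable ENNReal.summable
      _ = ∑' n : ℕ, ∑' k : ℕ, (if n ≤ k then Λ n * ρ' ^ (k-n) else 0) := ENNReal.tsum_comm
      _ = ∑' n : ℕ, Λ n * ∑' k : ℕ, (if n ≤ k then ρ' ^ (k-n) else 0) := by
          refine tsum_congr (fun n => ?_)
          rw [← ENNReal.tsum_mul_left]
          refine tsum_congr (fun k => ?_)
          split_ifs <;> simp
      _ = ∑' n : ℕ, Λ n * (1 - ρ')⁻¹ := by
          refine tsum_congr (fun n => ?_)
          congr 1
          have hinj : Function.Injective (fun j : ℕ => j + n) := add_left_injective n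
          have hsupp : Function.support (fun k : ℕ => if n ≤ k then ρ' ^ (k-n) else 0)
              ⊆ Set.range (fun j : ℕ => j + n) := by
            intro k hk
            rw [Function.mem_support] at hk
            by_cases h : n ≤ k
            · exact ⟨k - n, by simp only []; omega⟩
            · exact absurd (if_neg h) hk
          have := hinj.tsum_eq hsupp
          rw [← this]
          simp only [le_add_iff_nonneg_left, zero_le, if_true, Nat.add_sub_cancel]
          exact ENNReal.tsum_geometric ρ'
      _ = (∑' n, Λ n) * (1 - ρ')⁻¹ := ENNReal.tsum_mul_right
  -- ### Step 3 : bound on ∑' Λ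
  have hstep3 : (∑' n, Λ n) ≤ ENNReal.ofReal (C * Real.exp θ * Real.exp (-θ * v) * Real.exp t₀)
      * (1 - ENNReal.ofReal (Real.exp (t₀ - θ)))⁻¹ := by
    have hmsB : ∀ n (j : ℕ), MeasurableSet (A n ∩ {ω | v + j ≤ ∑ i ∈ Finset.range n, X i ω}) :=
      fun n j => (hAmeas n).inter (measurableSet_le measurable_const (hSmeas n))
    have hptΛ : ∀ n, Λ n ≤ ∑' j : ℕ, ENNReal.ofReal (Real.exp (t₀ * (j+1)))
        * P (A n ∩ {ω | v + j ≤ ∑ i ∈ Finset.range n, X i ω}) := by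
      intro n
      have hpoint : ∀ ω, (A n).indicator
          (fun ω => ENNReal.ofReal (Real.exp (t₀ * ((∑ i ∈ Finset.range n, X i ω) - v)))) ω
          ≤ ∑' j : ℕ, ENNReal.ofReal (Real.exp (t₀ * (j+1)))
            * ((A n ∩ {ω | v + j ≤ ∑ i ∈ Finset.range n, X i ω}).indicator
              (fun _ => (1:ℝ≥0∞)) ω) := by
        intro ω
        by_cases hω : ω ∈ A n
        · rw [Set.indicator_of_mem hω]
          have hu : 0 ≤ (∑ i ∈ Finset.range n, X i ω) - v :=
            (sub_nonneg.mpr ((hAmem n ω).mp hω).1.le)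
          have h1 : ((⌊(∑ i ∈ Finset.range n, X i ω) - v⌋₊ : ℝ))
              ≤ (∑ i ∈ Finset.range n, X i ω) - v := Nat.floor_le hu
          have h2 : (∑ i ∈ Finset.range n, X i ω) - v
              < (⌊(∑ i ∈ Finset.range n, X i ω) - v⌋₊ : ℝ) + 1 := Nat.lt_floor_add_one _
          refine le_trans ?_ (ENNReal.le_tsum ⌊(∑ i ∈ Finset.range n, X i ω) - v⌋₊)
          rw [Set.indicator_of_mem (Set.mem_inter hω
            (by simp only [Set.mem_setOf_eq]; linarith)), mul_one]
          exact ENNReal.ofReal_le_ofReal (Real.exp_le_exp.mpr (by nlinarith))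
        · rw [Set.indicator_of_notMem hω]
          exact zero_le
      rw [hΛ]
      refine (lintegral_mono hpoint).trans ?_
      rw [lintegral_tsum (fun j => ((measurable_const.indicator (hmsB n j)).const_mul
        _).aemeasurable)]
      refine Summable.tsum_le_tsum (fun j => ?_) ENNReal.summable ENNReal.summable
      rw [lintegral_const_mul _ (measurable_const.indicator (hmsB n j))]
      gcongr
      rw [lintegral_indicator (hmsB n j)]
      simp
    have hUj : ∀ j : ℕ, (∑' n, P (A n ∩ {ω | v + j ≤ ∑ i ∈ Finset.range n, X i ω}))
        ≤ ENNReal.ofReal ((C * Real.exp θ * Real.exp (-θ * v)) * Real.exp (-θ * j)) := by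
      intro j
      have hdisj2 : Pairwise (Function.onFun Disjoint
          (fun n => A n ∩ {ω | v + j ≤ ∑ i ∈ Finset.range n, X i ω})) :=
        hAdisj.mono (fun a b hab => hab.mono Set.inter_subset_left Set.inter_subset_left)
      rw [← measure_iUnion hdisj2 (fun n => hmsB n j)]
      have hsub : (⋃ n, A n ∩ {ω | v + j ≤ ∑ i ∈ Finset.range n, X i ω})
          ⊆ {ω | ∃ n, (∑ i ∈ Finset.range n, X i ω) > (v + j) - 1} := by
        intro ω hω
        obtain ⟨n, hn⟩ := Set.mem_iUnion.mp hω
        exact ⟨n, by have := hn.2; simp only [Set.mem_setOf_eq] at this ⊢; linarith⟩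
      refine (measure_mono hsub).trans ((htail _).trans (le_of_eq ?_))
      congr 1
      rw [mul_assoc, mul_assoc, ← Real.exp_add, ← Real.exp_add]
      congr 2
      ring
    calc (∑' n, Λ n) ≤ ∑' n, ∑' j : ℕ, ENNReal.ofReal (Real.exp (t₀ * (j+1)))
          * P (A n ∩ {ω | v + j ≤ ∑ i ∈ Finset.range n, X i ω}) :=
        Summable.tsum_le_tsum hptΛ ENNReal.summable ENNReal.summable
      _ = ∑' j : ℕ, ∑' n, ENNReal.ofReal (Real.exp (t₀ * (j+1)))
          * P (A n ∩ {ω | v + j ≤ ∑ i ∈ Finset.range n, X i ω}) := ENNReal.tsum_comm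
      _ = ∑' j : ℕ, ENNReal.ofReal (Real.exp (t₀ * (j+1)))
          * ∑' n, P (A n ∩ {ω | v + j ≤ ∑ i ∈ Finset.range n, X i ω}) := by
          exact tsum_congr (fun j => ENNReal.tsum_mul_left)
      _ ≤ ∑' j : ℕ, ENNReal.ofReal (Real.exp (t₀ * (j+1)))
          * ENNReal.ofReal ((C * Real.exp θ * Real.exp (-θ * v)) * Real.exp (-θ * j)) :=
          Summable.tsum_le_tsum (fun j => mul_le_mul_right (hUj j) _)
            ENNReal.summable ENNReal.summable
      _ = ENNReal.ofReal ((C * Real.exp θ * Real.exp (-θ * v)) * Real.exp t₀)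
          * (1 - ENNReal.ofReal (Real.exp (t₀ - θ)))⁻¹ := geom_tail_sum ht₀θ (by positivity)
      _ = ENNReal.ofReal (C * Real.exp θ * Real.exp (-θ * v) * Real.exp t₀)
          * (1 - ENNReal.ofReal (Real.exp (t₀ - θ)))⁻¹ := rfl
  -- ### assemble
  refine hstep2.trans ?_
  calc (∑' n, Λ n) * (1 - ρ')⁻¹
      ≤ (ENNReal.ofReal (C * Real.exp θ * Real.exp (-θ * v) * Real.exp t₀)
        * (1 - ENNReal.ofReal (Real.exp (t₀ - θ)))⁻¹) * (1 - ρ')⁻¹ :=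
        mul_le_mul_left hstep3 _
    _ = ENNReal.ofReal (C * Real.exp (t₀ + θ)) * (1 - ENNReal.ofReal (Real.exp (t₀ - θ)))⁻¹
        * (1 - ρ')⁻¹ * ENNReal.ofReal (Real.exp (-θ * v)) := by
        rw [show C * Real.exp θ * Real.exp (-θ * v) * Real.exp t₀
          = (C * Real.exp (t₀ + θ)) * Real.exp (-θ * v) by rw [Real.exp_add]; ring]
        rw [ENNReal.ofReal_mul (by positivity)]
        ring


lemma upper_bound (P : Measure Ω) [IsProbabilityMeasure P] (X : ℕ → Ω → ℝ) (ξ : ℕ → Ω → ℝ)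
    (hXmeas : ∀ i, Measurable (X i)) (hξmeas : ∀ j, Measurable (ξ j))
    (hXξindep : IndepFun (fun ω => fun n : ℕ => X n ω) (fun ω => fun n : ℕ => ξ n ω) P)
    (hidξ : ∀ k, IdentDistrib (ξ k) (ξ 0) P P)
    {θ : ℝ} (hθ : 0 < θ) {D : ℝ≥0∞}
    (hocc : ∀ v : ℝ, ∑' k : ℕ, P {ω | (∑ i ∈ Finset.range k, X i ω) > v}
      ≤ D * ENNReal.ofReal (Real.exp (-θ * v))) (x : ℝ) :
    P {ω | ∃ k : ℕ, (∑ i ∈ Finset.range k, X i ω) + ξ k ω > x}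
      ≤ D * ENNReal.ofReal (Real.exp θ) * (∫⁻ ω, ENNReal.ofReal (Real.exp (θ * ξ 0 ω)) ∂P)
        * ENNReal.ofReal (Real.exp (-θ * x)) := by
  have hSmeas : ∀ k, Measurable (fun ω => ∑ i ∈ Finset.range k, X i ω) := fun k =>
    Finset.measurable_sum _ (fun i _ => hXmeas i)
  have hcover : {ω | ∃ k : ℕ, (∑ i ∈ Finset.range k, X i ω) + ξ k ω > x}
      ⊆ ⋃ j : ℤ, ⋃ k : ℕ, ({ω | (∑ i ∈ Finset.range k, X i ω) > x - ((j : ℝ)+1)} ∩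
        {ω | ξ k ω ∈ Set.Ico (j : ℝ) ((j : ℝ)+1)}) := by
    intro ω hω
    obtain ⟨k, hk⟩ := hω
    refine Set.mem_iUnion.mpr ⟨⌊ξ k ω⌋, Set.mem_iUnion.mpr ⟨k, ⟨?_, ?_⟩⟩⟩
    · have h1 : ξ k ω < (⌊ξ k ω⌋ : ℝ) + 1 := Int.lt_floor_add_one _
      simp only [Set.mem_setOf_eq] at hk ⊢
      linarith
    · exact ⟨Int.floor_le _, Int.lt_floor_add_one _⟩
  refine (measure_mono hcover).trans ((measure_iUnion_le _).trans ?_)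
  -- independence per k
  have hI : ∀ k : ℕ, IndepFun (fun ω => ∑ i ∈ Finset.range k, X i ω) (ξ k) P := by
    intro k
    exact hXξindep.comp (Finset.measurable_sum (Finset.range k)
      (fun i _ => measurable_pi_apply i) :
        Measurable (fun y : ℕ → ℝ => ∑ i ∈ Finset.range k, y i)) (measurable_pi_apply k)
  have hmul : ∀ (j : ℤ) (k : ℕ),
      P ({ω | (∑ i ∈ Finset.range k, X i ω) > x - ((j : ℝ)+1)} ∩
        {ω | ξ k ω ∈ Set.Ico (j : ℝ) ((j : ℝ)+1)})
      = P {ω | (∑ i ∈ Finset.range k, X i ω) > x - ((j : ℝ)+1)}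
        * P {ω | ξ 0 ω ∈ Set.Ico (j : ℝ) ((j : ℝ)+1)} := by
    intro j k
    have h1 := (indepFun_iff_measure_inter_preimage_eq_mul.mp (hI k))
      (Set.Ioi (x - ((j : ℝ)+1))) (Set.Ico (j : ℝ) ((j : ℝ)+1))
      measurableSet_Ioi measurableSet_Ico
    have h2 : P {ω | ξ k ω ∈ Set.Ico (j : ℝ) ((j : ℝ)+1)}
        = P {ω | ξ 0 ω ∈ Set.Ico (j : ℝ) ((j : ℝ)+1)} :=
      (hidξ k).measure_mem_eq measurableSet_Ico
    rw [← h2]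
    exact h1
  calc ∑' j : ℤ, P (⋃ k : ℕ, ({ω | (∑ i ∈ Finset.range k, X i ω) > x - ((j : ℝ)+1)} ∩
        {ω | ξ k ω ∈ Set.Ico (j : ℝ) ((j : ℝ)+1)}))
      ≤ ∑' j : ℤ, ∑' k : ℕ, P ({ω | (∑ i ∈ Finset.range k, X i ω) > x - ((j : ℝ)+1)} ∩
        {ω | ξ k ω ∈ Set.Ico (j : ℝ) ((j : ℝ)+1)}) :=
        Summable.tsum_le_tsum (fun j => measure_iUnion_le _) ENNReal.summable ENNReal.summable
    _ = ∑' j : ℤ, (∑' k : ℕ, P {ω | (∑ i ∈ Finset.range k, X i ω) > x - ((j : ℝ)+1)})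
        * P {ω | ξ 0 ω ∈ Set.Ico (j : ℝ) ((j : ℝ)+1)} := by
        refine tsum_congr (fun j => ?_)
        rw [← ENNReal.tsum_mul_right]
        exact tsum_congr (fun k => hmul j k)
    _ ≤ ∑' j : ℤ, (D * ENNReal.ofReal (Real.exp θ) * ENNReal.ofReal (Real.exp (-θ * x))
          * ENNReal.ofReal (Real.exp (θ * j)))
        * P {ω | ξ 0 ω ∈ Set.Ico (j : ℝ) ((j : ℝ)+1)} := by
        refine Summable.tsum_le_tsum (fun j => mul_le_mul_left ?_ _)
          ENNReal.summable ENNReal.summable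
        refine (hocc _).trans (le_of_eq ?_)
        rw [mul_assoc, mul_assoc, ← ENNReal.ofReal_mul (Real.exp_nonneg _),
          ← ENNReal.ofReal_mul (Real.exp_nonneg _), ← Real.exp_add, ← Real.exp_add]
        congr 2
        ring
    _ = (D * ENNReal.ofReal (Real.exp θ) * ENNReal.ofReal (Real.exp (-θ * x)))
        * ∑' j : ℤ, ENNReal.ofReal (Real.exp (θ * j))
          * P {ω | ξ 0 ω ∈ Set.Ico (j : ℝ) ((j : ℝ)+1)} := by
        rw [← ENNReal.tsum_mul_left]
        refine tsum_congr (fun j => ?_)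
        ring
    _ ≤ (D * ENNReal.ofReal (Real.exp θ) * ENNReal.ofReal (Real.exp (-θ * x)))
        * ∫⁻ ω, ENNReal.ofReal (Real.exp (θ * ξ 0 ω)) ∂P := by
        refine mul_le_mul_right ?_ _
        have hperj : ∀ j : ℤ, ENNReal.ofReal (Real.exp (θ * j))
            * P {ω | ξ 0 ω ∈ Set.Ico (j : ℝ) ((j : ℝ)+1)}
            ≤ ∫⁻ ω in {ω | ξ 0 ω ∈ Set.Ico (j : ℝ) ((j : ℝ)+1)},
              ENNReal.ofReal (Real.exp (θ * ξ 0 ω)) ∂P := by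
          intro j
          rw [← setLIntegral_const]
          refine setLIntegral_mono (((hξmeas 0).const_mul θ).exp.ennreal_ofReal) ?_
          intro ω hω
          exact ENNReal.ofReal_le_ofReal (Real.exp_le_exp.mpr
            (mul_le_mul_of_nonneg_left hω.1 hθ.le))
        refine (Summable.tsum_le_tsum hperj ENNReal.summable ENNReal.summable).trans ?_
        have hdisj : Pairwise (Function.onFun Disjoint
            (fun j : ℤ => {ω | ξ 0 ω ∈ Set.Ico (j : ℝ) ((j : ℝ)+1)})) := by
          intro a b hab
          rw [Function.onFun, Set.disjoint_left]
          intro ω ha hb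
          simp only [Set.mem_setOf_eq, Set.mem_Ico] at ha hb
          have : a = b := by
            have h1 : (a : ℝ) < (b : ℝ) + 1 := lt_of_le_of_lt ha.1 hb.2
            have h2 : (b : ℝ) < (a : ℝ) + 1 := lt_of_le_of_lt hb.1 ha.2
            have h1' : a < b + 1 := by exact_mod_cast h1
            have h2' : b < a + 1 := by exact_mod_cast h2
            omega
          exact hab this
        have hmeasj : ∀ j : ℤ, MeasurableSet {ω | ξ 0 ω ∈ Set.Ico (j : ℝ) ((j : ℝ)+1)} :=
          fun j => (hξmeas 0) measurableSet_Ico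
        rw [← lintegral_iUnion hmeasj hdisj]
        have huniv : (⋃ j : ℤ, {ω | ξ 0 ω ∈ Set.Ico (j : ℝ) ((j : ℝ)+1)}) = Set.univ := by
          rw [Set.eq_univ_iff_forall]
          intro ω
          exact Set.mem_iUnion.mpr ⟨⌊ξ 0 ω⌋, Int.floor_le _, Int.lt_floor_add_one _⟩
        rw [huniv, Measure.restrict_univ]
    _ = D * ENNReal.ofReal (Real.exp θ) * (∫⁻ ω, ENNReal.ofReal (Real.exp (θ * ξ 0 ω)) ∂P)
        * ENNReal.ofReal (Real.exp (-θ * x)) := by ring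

lemma argmax_ae (P : Measure Ω) [IsProbabilityMeasure P] (X : ℕ → Ω → ℝ)
    (hXmeas : ∀ i, Measurable (X i))
    (hindep : iIndepFun X P)
    (hident : ∀ i, IdentDistrib (X i) (X 0) P P)
    {θ : ℝ} (hθ : 0 < θ)
    (hint0 : Integrable (fun ω => Real.exp ((θ/4) * X 0 ω)) P)
    (hρ : mgf (X 0) P (θ/4) < 1) :
    ∀ᵐ ω ∂P, ∃ n, ∀ m, (∑ i ∈ Finset.range m, X i ω) ≤ ∑ i ∈ Finset.range n, X i ω := by
  have ht₀ : 0 < θ/4 := by positivity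
  set t₀ : ℝ := θ/4 with ht₀def
  set ρ : ℝ := mgf (X 0) P t₀ with hρdef
  have hρpos : 0 < ρ := mgf_pos hint0
  set q : ℝ := Real.sqrt ρ with hqdef
  have hqpos : 0 < q := Real.sqrt_pos.mpr hρpos
  have hqsq : q ^ 2 = ρ := Real.sq_sqrt hρpos.le
  have hq1 : q < 1 := by nlinarith [hρ, hqpos]
  have hρq : ρ < q := by nlinarith [hρ, hqpos, hρpos]
  set c : ℝ := Real.log (q / ρ) / t₀ with hcdef
  have hqρ1 : 1 < q / ρ := (one_lt_div hρpos).mpr hρq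
  have hc : 0 < c := div_pos (Real.log_pos hqρ1) ht₀
  have hexpc : Real.exp (t₀ * c) = q / ρ := by
    rw [hcdef, mul_div_cancel₀ _ (ne_of_gt ht₀)]
    exact Real.exp_log (by positivity)
  have hch : ∀ k : ℕ, P {ω | -(c*k) < (∑ i ∈ Finset.range k, X i ω)}
      ≤ ENNReal.ofReal (q ^ k) := by
    intro k
    have hint : Integrable (fun ω => Real.exp (t₀ * (∑ i ∈ Finset.range k, X i) ω)) P :=
      hindep.integrable_exp_mul_sum hXmeas
        (fun i _ => ident_exp_integrable P X hident hint0 i)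
    have hcb := measure_ge_le_exp_mul_mgf (X := ∑ i ∈ Finset.range k, X i) (μ := P)
      (-(c*k)) ht₀.le hint
    have hsub : {ω | -(c*k) < ∑ i ∈ Finset.range k, X i ω}
        ⊆ {ω | -(c*k) ≤ (∑ i ∈ Finset.range k, X i) ω} := by
      intro ω h
      simp only [Set.mem_setOf_eq, Finset.sum_apply] at h ⊢
      exact h.le
    calc P {ω | -(c*k) < ∑ i ∈ Finset.range k, X i ω}
        ≤ P {ω | -(c*k) ≤ (∑ i ∈ Finset.range k, X i) ω} := measure_mono hsub
      _ = ENNReal.ofReal ((P {ω | -(c*k) ≤ (∑ i ∈ Finset.range k, X i) ω}).toReal) :=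
          (ENNReal.ofReal_toReal (measure_ne_top _ _)).symm
      _ ≤ ENNReal.ofReal (Real.exp (-t₀ * -(c*k)) * mgf (∑ i ∈ Finset.range k, X i) P t₀) :=
          ENNReal.ofReal_le_ofReal hcb
      _ = ENNReal.ofReal (q ^ k) := by
          congr 1
          rw [mgf_sum_pow P X hXmeas hindep hident t₀ k, ← hρdef]
          have h1 : -t₀ * -(c*(k:ℝ)) = (k:ℝ) * (t₀ * c) := by ring
          rw [h1, Real.exp_nat_mul, hexpc, div_pow, div_mul_cancel₀]
          exact pow_ne_zero k (ne_of_gt hρpos)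
  have hsumfin : (∑' k : ℕ, P {ω | -(c*(k:ℝ)) < (∑ i ∈ Finset.range k, X i ω)}) ≠ ∞ := by
    refine ne_of_lt (lt_of_le_of_lt (Summable.tsum_le_tsum hch ENNReal.summable ENNReal.summable) ?_)
    have h1 : ∀ k : ℕ, ENNReal.ofReal (q ^ k) = ENNReal.ofReal q ^ k := fun k =>
      ENNReal.ofReal_pow hqpos.le k
    simp_rw [h1]
    rw [ENNReal.tsum_geometric]
    refine ENNReal.inv_lt_top.mpr ?_
    rw [tsub_pos_iff_lt]
    exact ENNReal.ofReal_lt_one.mpr hq1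
  have hBC := measure_limsup_atTop_eq_zero hsumfin
  have hae : ∀ᵐ ω ∂P, ω ∉ limsup
      (fun k : ℕ => {ω | -(c*(k:ℝ)) < (∑ i ∈ Finset.range k, X i ω)}) atTop := by
    rw [ae_iff]
    simpa using hBC
  filter_upwards [hae] with ω hω
  have hev : ∀ᶠ k : ℕ in atTop, (∑ i ∈ Finset.range k, X i ω) ≤ -(c*(k:ℝ)) := by
    have h2 := mem_limsup_iff_frequently_mem.not.mp hω
    rw [Filter.not_frequently] at h2
    refine h2.mono (fun k hk => ?_)
    simpa [Set.mem_setOf_eq, not_lt] using hk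
  obtain ⟨N, hN⟩ := eventually_atTop.mp hev
  obtain ⟨n, hn_mem, hn⟩ := Finset.exists_max_image (Finset.range (N+1))
    (fun m => ∑ i ∈ Finset.range m, X i ω) ⟨0, Finset.mem_range.mpr (Nat.succ_pos N)⟩
  refine ⟨n, fun m => ?_⟩
  by_cases hm : m ≤ N
  · exact hn m (Finset.mem_range.mpr (Nat.lt_succ_of_le hm))
  · push_neg at hm
    have h1 : (∑ i ∈ Finset.range m, X i ω) ≤ -(c*(m:ℝ)) := hN m hm.le
    have h2 : (0:ℝ) ≤ ∑ i ∈ Finset.range n, X i ω := by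
      have := hn 0 (Finset.mem_range.mpr (Nat.succ_pos N))
      simpa using this
    have h3 : (0:ℝ) ≤ c * (m:ℝ) := by positivity
    linarith

lemma lower_bound (P : Measure Ω) [IsProbabilityMeasure P] (X : ℕ → Ω → ℝ) (ξ : ℕ → Ω → ℝ)
    (hXmeas : ∀ i, Measurable (X i)) (hξmeas : ∀ j, Measurable (ξ j))
    (hXξindep : IndepFun (fun ω => fun n : ℕ => X n ω) (fun ω => fun n : ℕ => ξ n ω) P)
    (hidξ : ∀ k, IdentDistrib (ξ k) (ξ 0) P P)
    (harg : ∀ᵐ ω ∂P, ∃ n, ∀ m, (∑ i ∈ Finset.range m, X i ω) ≤ ∑ i ∈ Finset.range n, X i ω)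
    (x : ℝ) :
    ∫⁻ s, P {ω | ∃ n, (∑ i ∈ Finset.range n, X i ω) > x - s} ∂(P.map (ξ 0))
      ≤ P {ω | ∃ k : ℕ, (∑ i ∈ Finset.range k, X i ω) + ξ k ω > x} := by
  classical
  set μ₀ : Measure ℝ := P.map (ξ 0) with hμ₀
  haveI : IsProbabilityMeasure μ₀ := Measure.isProbabilityMeasure_map (hξmeas 0).aemeasurable
  set Xp : Ω → (ℕ → ℝ) := fun ω => fun n => X n ω with hXp
  have hXpmeas : Measurable Xp := measurable_pi_lambda _ (fun n => hXmeas n)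
  set ν : Measure (ℕ → ℝ) := P.map Xp with hν
  haveI : IsProbabilityMeasure ν := Measure.isProbabilityMeasure_map hXpmeas.aemeasurable
  set PS : ℕ → (ℕ → ℝ) → ℝ := fun n y => ∑ i ∈ Finset.range n, y i with hPS
  have hPSmeas : ∀ n, Measurable (PS n) := fun n =>
    Finset.measurable_sum _ (fun i _ => measurable_pi_apply i)
  set E : ℕ → Set (ℕ → ℝ) := fun n =>
    ({y | ∀ m, PS m y ≤ PS n y} ∩ ⋂ l, ⋂ (_ : l < n), {y | ¬ ∀ m, PS m y ≤ PS l y}) with hE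
  have hmax_meas : ∀ n, MeasurableSet {y : ℕ → ℝ | ∀ m, PS m y ≤ PS n y} := by
    intro n
    have : {y : ℕ → ℝ | ∀ m, PS m y ≤ PS n y} = ⋂ m, {y | PS m y ≤ PS n y} := by
      ext y; simp [Set.mem_iInter]
    rw [this]
    exact MeasurableSet.iInter (fun m => measurableSet_le (hPSmeas m) (hPSmeas n))
  have hEmeas : ∀ n, MeasurableSet (E n) := by
    intro n
    refine (hmax_meas n).inter ?_
    exact MeasurableSet.iInter (fun l => MeasurableSet.iInter (fun _ =>
      (hmax_meas l).compl))
  have hEdisj : Pairwise (Function.onFun Disjoint E) := by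
    have key : ∀ a b, a < b → Disjoint (E a) (E b) := by
      intro a b hab
      rw [Set.disjoint_left]
      intro y ha hb
      have h1 := Set.mem_iInter.mp (Set.mem_iInter.mp hb.2 a) hab
      exact h1 ha.1
    intro a b hab
    rcases hab.lt_or_gt with h | h
    · exact key a b h
    · exact (key b a h).symm
  have hargXp : ∀ᵐ ω ∂P, Xp ω ∈ ⋃ n, E n := by
    filter_upwards [harg] with ω hω
    have hex : ∃ n, ∀ m, PS m (Xp ω) ≤ PS n (Xp ω) := hω
    refine Set.mem_iUnion.mpr ⟨Nat.find hex, ⟨Nat.find_spec hex, ?_⟩⟩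
    refine Set.mem_iInter.mpr (fun l => Set.mem_iInter.mpr (fun hl => ?_))
    exact Nat.find_min hex hl
  set B : ℕ → Set Ω := fun n => (Xp ⁻¹' E n) ∩
    {ω | (∑ i ∈ Finset.range n, X i ω) + ξ n ω > x} with hB
  have hSXmeas : ∀ n, Measurable (fun ω => (∑ i ∈ Finset.range n, X i ω) + ξ n ω) := by
    intro n
    exact (Finset.measurable_sum _ (fun i _ => hXmeas i)).add (hξmeas n)
  have hBmeas : ∀ n, MeasurableSet (B n) := fun n =>
    (hXpmeas (hEmeas n)).inter (measurableSet_lt measurable_const (hSXmeas n))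
  have hBdisj : Pairwise (Function.onFun Disjoint B) :=
    hEdisj.mono (fun a b hab =>
      ((hab.preimage Xp).mono Set.inter_subset_left Set.inter_subset_left))
  have hBsub : ∀ n, B n ⊆ {ω | ∃ k : ℕ, (∑ i ∈ Finset.range k, X i ω) + ξ k ω > x} :=
    fun n ω hω => ⟨n, hω.2⟩
  have hpair : ∀ n : ℕ, P.map (fun ω => (Xp ω, ξ n ω)) = ν.prod μ₀ := by
    intro n
    have hin : IndepFun Xp (ξ n) P := hXξindep.comp measurable_id (measurable_pi_apply n)
    have h1 := (indepFun_iff_map_prod_eq_prod_map_map hXpmeas.aemeasurable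
      (hξmeas n).aemeasurable).mp hin
    rw [h1, (hidξ n).map_eq]
  have hsecmeas : ∀ n, Measurable (fun y => μ₀ {s : ℝ | PS n y + s > x}) := by
    intro n
    have heq : (fun y => μ₀ {s : ℝ | PS n y + s > x})
        = (fun u : ℝ => μ₀ (Set.Ioi (x - u))) ∘ PS n := by
      funext y
      simp only [Function.comp_apply]
      congr 1
      ext s
      simp only [Set.mem_setOf_eq, Set.mem_Ioi]
      constructor <;> intro <;> linarith
    rw [heq]
    refine Monotone.measurable (fun u u' huu' => ?_) |>.comp (hPSmeas n)
    exact measure_mono (fun s hs => lt_of_le_of_lt (by linarith : x - u' ≤ x - u) hs)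
  have hPB : ∀ n : ℕ, P (B n)
      = ∫⁻ y, (E n).indicator (fun y => μ₀ {s : ℝ | PS n y + s > x}) y ∂ν := by
    intro n
    set Cn : Set ((ℕ → ℝ) × ℝ) := (Prod.fst ⁻¹' E n) ∩ {p | PS n p.1 + p.2 > x} with hCn
    have hCnmeas : MeasurableSet Cn := by
      refine ((hEmeas n).preimage measurable_fst).inter ?_
      exact measurableSet_lt measurable_const (((hPSmeas n).comp measurable_fst).add
        measurable_snd)
    have hBn : B n = (fun ω => (Xp ω, ξ n ω)) ⁻¹' Cn := rfl
    rw [hBn, ← Measure.map_apply (hXpmeas.prodMk (hξmeas n)) hCnmeas, hpair n,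
      Measure.prod_apply hCnmeas]
    refine lintegral_congr (fun y => ?_)
    by_cases hy : y ∈ E n
    · rw [Set.indicator_of_mem hy]
      congr 1
      ext s
      simp only [hCn, Set.mem_preimage, Set.mem_inter_iff, Set.mem_setOf_eq]
      exact ⟨fun h => h.2, fun h => ⟨hy, h⟩⟩
    · rw [Set.indicator_of_notMem hy]
      have hempty : (Prod.mk y ⁻¹' Cn) = ∅ := by
        ext s
        simp only [hCn, Set.mem_preimage, Set.mem_inter_iff, Set.mem_setOf_eq,
          Set.mem_empty_iff_false, iff_false, not_and]
        intro h
        exact absurd h hy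
      rw [hempty]
      exact measure_empty
  have hW : MeasurableSet {p : (ℕ → ℝ) × ℝ | ∃ k, PS k p.1 + p.2 > x} := by
    have heq : {p : (ℕ → ℝ) × ℝ | ∃ k, PS k p.1 + p.2 > x}
        = ⋃ k, {p : (ℕ → ℝ) × ℝ | PS k p.1 + p.2 > x} := by
      ext p; simp [Set.mem_iUnion]
    rw [heq]
    exact MeasurableSet.iUnion (fun k => measurableSet_lt measurable_const
      (((hPSmeas k).comp measurable_fst).add measurable_snd))
  calc ∫⁻ s, P {ω | ∃ n, (∑ i ∈ Finset.range n, X i ω) > x - s} ∂μ₀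
      = ∫⁻ s, ν {y | ∃ k, PS k y + s > x} ∂μ₀ := by
        refine lintegral_congr (fun s => ?_)
        rw [hν, Measure.map_apply hXpmeas]
        · congr 1
          ext ω
          simp only [Set.mem_setOf_eq, Set.mem_preimage]
          constructor
          · rintro ⟨n, hn⟩
            exact ⟨n, by linarith⟩
          · rintro ⟨k, hk⟩
            exact ⟨k, by linarith⟩
        · have heq : {y : ℕ → ℝ | ∃ k, PS k y + s > x} = ⋃ k, {y | PS k y + s > x} := by
            ext y; simp [Set.mem_iUnion]
          rw [heq]
          exact MeasurableSet.iUnion (fun k => measurableSet_lt measurable_const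
            ((hPSmeas k).add measurable_const))
    _ = (ν.prod μ₀) {p : (ℕ → ℝ) × ℝ | ∃ k, PS k p.1 + p.2 > x} := by
        rw [Measure.prod_apply_symm hW]
        rfl
    _ = ∫⁻ y, μ₀ {s : ℝ | ∃ k, PS k y + s > x} ∂ν := by
        rw [Measure.prod_apply hW]
        rfl
    _ = ∫⁻ y, (⋃ n, E n).indicator (fun y => μ₀ {s : ℝ | ∃ k, PS k y + s > x}) y ∂ν := by
        have hfull : ∀ᵐ y ∂ν, y ∈ ⋃ n, E n :=
          (ae_map_iff hXpmeas.aemeasurable (MeasurableSet.iUnion hEmeas)).mpr hargXp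
        refine lintegral_congr_ae ?_
        filter_upwards [hfull] with y hy
        rw [Set.indicator_of_mem hy]
    _ ≤ ∫⁻ y, ∑' n, (E n).indicator (fun y => μ₀ {s : ℝ | PS n y + s > x}) y ∂ν := by
        refine lintegral_mono (fun y => ?_)
        by_cases hy : y ∈ ⋃ n, E n
        · rw [Set.indicator_of_mem hy]
          obtain ⟨n, hn⟩ := Set.mem_iUnion.mp hy
          refine le_trans ?_ (ENNReal.le_tsum n)
          rw [Set.indicator_of_mem hn]
          refine measure_mono (fun s hs => ?_)
          obtain ⟨k, hk⟩ := hs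
          have hmax := hn.1 k
          simp only [Set.mem_setOf_eq] at hk ⊢
          linarith
        · rw [Set.indicator_of_notMem hy]
          exact zero_le
    _ = ∑' n, P (B n) := by
        rw [lintegral_tsum (fun n =>
          ((hsecmeas n).indicator (hEmeas n)).aemeasurable)]
        exact tsum_congr (fun n => (hPB n).symm)
    _ = P (⋃ n, B n) := (measure_iUnion hBdisj hBmeas).symm
    _ ≤ P {ω | ∃ k : ℕ, (∑ i ∈ Finset.range k, X i ω) + ξ k ω > x} :=
        measure_mono (Set.iUnion_subset hBsub)

end PRW

/-- If the unperturbed walk satisfies the Cramér–Lundberg asymptotic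
`P(max_n S_n > x) ~ r e^{-θ* x}` and the stationary perturbations (independent of
the walk) satisfy `E[exp (θ* ξ₀)] < ∞`, then
`liminf_{x→∞} e^{θ* x} P(M_∞ > x) ≥ r E[exp (θ* ξ₀)]`. -/
theorem liminf_tail_perturbed_random_walk
    {Ω : Type*} [MeasurableSpace Ω] (P : Measure Ω) [IsProbabilityMeasure P]
    (X : ℕ → Ω → ℝ) (ξ : ℕ → Ω → ℝ)
    (hXmeas : ∀ i, Measurable (X i)) (hξmeas : ∀ j, Measurable (ξ j))
    (hindep : iIndepFun X P)
    (hident : ∀ i, IdentDistrib (X i) (X 0) P P)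
    (hstat : ∀ k : ℕ, IdentDistrib (fun ω => fun j : ℕ => ξ (j + k) ω)
      (fun ω => fun j : ℕ => ξ j ω) P P)
    (hXξindep : IndepFun (fun ω => fun n : ℕ => X n ω)
      (fun ω => fun n : ℕ => ξ n ω) P)
    (θ r : ℝ) (hθ : 0 < θ) (hr : 0 < r)
    (hCL : Tendsto (fun x : ℝ => Real.exp (θ * x) *
        (P {ω | ∃ n : ℕ, (∑ i ∈ Finset.range n, X i ω) > x}).toReal)
      atTop (nhds r))
    (hξexp : Integrable (fun ω => Real.exp (θ * ξ 0 ω)) P) :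
    r * ∫ ω, Real.exp (θ * ξ 0 ω) ∂P ≤
      Filter.liminf (fun x : ℝ => Real.exp (θ * x) *
        (P {ω | ∃ k : ℕ, (∑ i ∈ Finset.range k, X i ω) + ξ k ω > x}).toReal)
        atTop := by
  classical
  have hidξ : ∀ k, IdentDistrib (ξ k) (ξ 0) P P := by
    intro k
    have h1 := (hstat k).comp (measurable_pi_apply 0)
    have h2 : ((fun f : ℕ → ℝ => f 0) ∘ fun ω (j : ℕ) => ξ (j + k) ω) = ξ k := by
      funext ω
      show ξ (0 + k) ω = ξ k ω
      rw [Nat.zero_add]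
    have h3 : ((fun f : ℕ → ℝ => f 0) ∘ fun ω (j : ℕ) => ξ j ω) = ξ 0 := rfl
    rw [h2, h3] at h1
    exact h1
  -- tail constant
  have hub1 : ∀ᶠ x : ℝ in atTop, Real.exp (θ * x) *
      (P {ω | ∃ n : ℕ, (∑ i ∈ Finset.range n, X i ω) > x}).toReal ≤ r + 1 :=
    hCL.eventually (eventually_le_nhds (lt_add_one r))
  obtain ⟨x₀, hx₀⟩ := eventually_atTop.mp hub1
  set C : ℝ := max (r+1) (Real.exp (θ * x₀)) with hCdef
  have hCpos : (0:ℝ) ≤ C := le_max_of_le_left (by linarith)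
  have htail : ∀ v : ℝ, P {ω | ∃ n, (∑ i ∈ Finset.range n, X i ω) > v}
      ≤ ENNReal.ofReal (C * Real.exp (-θ * v)) := by
    intro v
    rcases le_or_gt x₀ v with hv | hv
    · have h2 := hx₀ v hv
      have hexppos : (0:ℝ) < Real.exp (θ * v) := Real.exp_pos _
      have hprod : Real.exp (θ * v) * Real.exp (-θ * v) = 1 := by
        rw [← Real.exp_add, show θ*v + -θ*v = 0 by ring, Real.exp_zero]
      have h3 : (P {ω | ∃ n, (∑ i ∈ Finset.range n, X i ω) > v}).toReal
          ≤ (r+1) * Real.exp (-θ*v) := by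
        have h4 := mul_le_mul_of_nonneg_right h2 (Real.exp_pos (-θ*v)).le
        calc (P {ω | ∃ n, (∑ i ∈ Finset.range n, X i ω) > v}).toReal
            = Real.exp (θ*v) * (P {ω | ∃ n, (∑ i ∈ Finset.range n, X i ω) > v}).toReal
              * Real.exp (-θ*v) := by
              rw [mul_comm (Real.exp (θ*v)), mul_assoc, hprod, mul_one]
          _ ≤ (r+1) * Real.exp (-θ*v) := h4
      calc P {ω | ∃ n, (∑ i ∈ Finset.range n, X i ω) > v}
          = ENNReal.ofReal ((P {ω | ∃ n, (∑ i ∈ Finset.range n, X i ω) > v}).toReal) :=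
            (ENNReal.ofReal_toReal (measure_ne_top _ _)).symm
        _ ≤ ENNReal.ofReal (C * Real.exp (-θ*v)) := by
            refine ENNReal.ofReal_le_ofReal (h3.trans ?_)
            have : (r+1) ≤ C := le_max_left _ _
            nlinarith [Real.exp_pos (-θ*v)]
    · refine le_trans prob_le_one ?_
      rw [show (1:ℝ≥0∞) = ENNReal.ofReal 1 by simp]
      refine ENNReal.ofReal_le_ofReal ?_
      have h4 : Real.exp (θ*x₀) * Real.exp (-θ*v) = Real.exp (θ*(x₀ - v)) := by
        rw [← Real.exp_add]; congr 1; ring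
      have h5 : (1:ℝ) ≤ Real.exp (θ*(x₀ - v)) := Real.one_le_exp (by nlinarith)
      have h6 : Real.exp (θ*x₀) ≤ C := le_max_right _ _
      nlinarith [Real.exp_pos (-θ*v)]
  -- X₀ tail and integrability
  have htail0 : ∀ j : ℕ, P {ω | (j : ℝ) ≤ X 0 ω}
      ≤ ENNReal.ofReal (C * Real.exp θ * Real.exp (-θ * j)) := by
    intro j
    have h1 := PRW.tail_shift P X htail 1 j
    simpa [Finset.sum_range_one] using h1
  have hint0 : Integrable (fun ω => Real.exp ((θ/4) * X 0 ω)) P :=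
    PRW.integrable_exp_of_tail P (hXmeas 0) (by linarith) (by linarith) (by positivity) htail0
  -- nondegeneracy
  have hρ : mgf (X 0) P (θ/4) < 1 := by
    rcases PRW.degenerate_or_mgf_lt_one P X hXmeas hindep hident hθ hCpos htail with h | h
    · exact h
    · exfalso
      have hall : ∀ᵐ ω ∂P, ∀ i, X i ω = 0 := by
        rw [ae_all_iff]
        intro i
        have hi := (hident i).measure_mem_eq ((measurableSet_singleton (0:ℝ)).compl)
        rw [ae_iff]
        have hset : {ω | ¬ X i ω = 0} = X i ⁻¹' ({0}ᶜ : Set ℝ) := by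
          ext ω; simp
        rw [hset, hi]
        have hset0 : X 0 ⁻¹' ({0}ᶜ : Set ℝ) = {ω | ¬ X 0 ω = 0} := by
          ext ω; simp
        rw [hset0, ← ae_iff]
        exact h
      have h0 : P {ω | ¬ (∀ i, X i ω = 0)} = 0 := ae_iff.mp hall
      have hnull : ∀ x : ℝ, 0 < x →
          P {ω | ∃ n, (∑ i ∈ Finset.range n, X i ω) > x} = 0 := by
        intro x hx
        refine measure_mono_null (fun ω hω => ?_) h0
        simp only [Set.mem_setOf_eq] at hω ⊢
        intro hcon
        obtain ⟨n, hn⟩ := hω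
        rw [Finset.sum_congr rfl (fun i _ => hcon i), Finset.sum_const_zero] at hn
        linarith
      have heq0 : (fun x : ℝ => Real.exp (θ * x) *
          (P {ω | ∃ n, (∑ i ∈ Finset.range n, X i ω) > x}).toReal)
          =ᶠ[atTop] (fun _ => (0:ℝ)) := by
        refine eventually_atTop.mpr ⟨1, fun x hx => ?_⟩
        show Real.exp (θ * x) *
          (P {ω | ∃ n, (∑ i ∈ Finset.range n, X i ω) > x}).toReal = 0
        rw [hnull x (by linarith), ENNReal.toReal_zero, mul_zero]
      have hr0 : r = (0:ℝ) :=
        tendsto_nhds_unique (Filter.Tendsto.congr' heq0 hCL) tendsto_const_nhds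
      linarith
  -- PRW.occupation bound and upper bound
  obtain ⟨D, hDne, hocc⟩ := PRW.occupation P X hXmeas hindep hident hθ hCpos htail hint0 hρ
  set g : ℝ≥0∞ := ∫⁻ ω, ENNReal.ofReal (Real.exp (θ * ξ 0 ω)) ∂P with hgdef
  have hgnn : 0 ≤ᵐ[P] fun ω => Real.exp (θ * ξ 0 ω) :=
    Filter.Eventually.of_forall (fun ω => (Real.exp_pos _).le)
  have hgr : ENNReal.ofReal (∫ ω, Real.exp (θ * ξ 0 ω) ∂P) = g :=
    ofReal_integral_eq_lintegral_ofReal hξexp hgnn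
  have hgne : g ≠ ∞ := by rw [← hgr]; exact ENNReal.ofReal_ne_top
  set D₂ : ℝ≥0∞ := D * ENNReal.ofReal (Real.exp θ) * g with hD₂def
  have hD₂ne : D₂ ≠ ∞ :=
    ENNReal.mul_ne_top (ENNReal.mul_ne_top hDne ENNReal.ofReal_ne_top) hgne
  have hub : ∀ x : ℝ, P {ω | ∃ k : ℕ, (∑ i ∈ Finset.range k, X i ω) + ξ k ω > x}
      ≤ D₂ * ENNReal.ofReal (Real.exp (-θ*x)) := fun x =>
    PRW.upper_bound P X ξ hXmeas hξmeas hXξindep hidξ hθ hocc x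
  have hfB : ∀ x : ℝ, Real.exp (θ * x) *
      (P {ω | ∃ k : ℕ, (∑ i ∈ Finset.range k, X i ω) + ξ k ω > x}).toReal
      ≤ D₂.toReal := by
    intro x
    have h1 : (P {ω | ∃ k : ℕ, (∑ i ∈ Finset.range k, X i ω) + ξ k ω > x}).toReal
        ≤ D₂.toReal * Real.exp (-θ*x) := by
      have h2 := ENNReal.toReal_mono
        (ENNReal.mul_ne_top hD₂ne ENNReal.ofReal_ne_top) (hub x)
      rwa [ENNReal.toReal_mul, ENNReal.toReal_ofReal (Real.exp_nonneg _)] at h2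
    have hprod : Real.exp (θ*x) * Real.exp (-θ*x) = 1 := by
      rw [← Real.exp_add, show θ*x + -θ*x = 0 by ring, Real.exp_zero]
    calc Real.exp (θ * x) *
        (P {ω | ∃ k : ℕ, (∑ i ∈ Finset.range k, X i ω) + ξ k ω > x}).toReal
        ≤ Real.exp (θ*x) * (D₂.toReal * Real.exp (-θ*x)) := by
          exact mul_le_mul_of_nonneg_left h1 (Real.exp_pos _).le
      _ = D₂.toReal := by
          rw [mul_comm (D₂.toReal), ← mul_assoc, hprod, one_mul]
  -- a.e. argmax & lower bound
  have harg := PRW.argmax_ae P X hXmeas hindep hident hθ hint0 hρ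
  have hlb := fun x : ℝ => PRW.lower_bound P X ξ hXmeas hξmeas hXξindep hidξ harg x
  set gr : ℝ := ∫ ω, Real.exp (θ * ξ 0 ω) ∂P with hgrdef
  have hgrpos : 0 < gr := by
    rw [hgrdef]
    refine (integral_pos_iff_support_of_nonneg (fun ω => (Real.exp_pos _).le) hξexp).mpr ?_
    have hsupp : Function.support (fun ω => Real.exp (θ * ξ 0 ω)) = Set.univ := by
      ext ω; simp [Function.mem_support, (Real.exp_pos (θ * ξ 0 ω)).ne']
    rw [hsupp]
    simp
  have hgmap : ∫⁻ s, ENNReal.ofReal (Real.exp (θ * s)) ∂(P.map (ξ 0)) = g := by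
    rw [hgdef]
    exact lintegral_map (measurable_const_mul θ).exp.ennreal_ofReal (hξmeas 0)
  -- eventual lower bound
  have hlow : ∀ δ : ℝ, 0 < δ → ∀ᶠ x : ℝ in atTop, r * gr - δ ≤ Real.exp (θ*x) *
      (P {ω | ∃ k : ℕ, (∑ i ∈ Finset.range k, X i ω) + ξ k ω > x}).toReal := by
    intro δ hδ
    set ε₁ : ℝ := min (r/2) (δ/(2*(gr+1))) with hε₁def
    have hε₁pos : 0 < ε₁ := lt_min (by linarith) (by positivity)
    have hε₁r : ε₁ ≤ r/2 := min_le_left _ _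
    set ε₂ : ℝ := min (gr/2) (δ/(2*r)) with hε₂def
    have hε₂pos : 0 < ε₂ := lt_min (by linarith) (by positivity)
    have hε₂g : ε₂ ≤ gr/2 := min_le_left _ _
    have hgsub : ENNReal.ofReal (gr - ε₂) < g := by
      rw [← hgr]
      exact (ENNReal.ofReal_lt_ofReal_iff hgrpos).mpr (by linarith)
    -- truncation
    set I : ℕ → ℝ → ℝ≥0∞ := fun T => (Set.Icc (-(T:ℝ)) T).indicator
      (fun s => ENNReal.ofReal (Real.exp (θ * s))) with hIdef
    have hImeas : ∀ T : ℕ, Measurable (I T) := fun T =>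
      ((measurable_const_mul θ).exp.ennreal_ofReal).indicator measurableSet_Icc
    have hImono : Monotone I := by
      intro T T' hTT' s
      refine Set.indicator_le_indicator_of_subset (Set.Icc_subset_Icc ?_ ?_)
        (fun s => zero_le) s
      · exact neg_le_neg (by exact_mod_cast hTT')
      · exact_mod_cast hTT'
    have hIsup : (⨆ T : ℕ, ∫⁻ s, I T s ∂(P.map (ξ 0))) = g := by
      rw [← lintegral_iSup hImeas hImono]
      rw [← hgmap]
      refine lintegral_congr (fun s => ?_)
      refine le_antisymm (iSup_le (fun T => Set.indicator_le_self _ _ s)) ?_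
      obtain ⟨T, hT⟩ := exists_nat_ge |s|
      refine le_iSup_of_le T ?_
      simp only [hIdef]
      rw [Set.indicator_of_mem (Set.mem_Icc.mpr ⟨neg_le_of_abs_le hT, le_of_abs_le hT⟩)]
    obtain ⟨T, hT⟩ := lt_iSup_iff.mp (by rw [hIsup]; exact hgsub :
      ENNReal.ofReal (gr - ε₂) < ⨆ T : ℕ, ∫⁻ s, I T s ∂(P.map (ξ 0)))
    have hlow1 : ∀ᶠ y : ℝ in atTop, r - ε₁ ≤ Real.exp (θ*y) *
        (P {ω | ∃ n : ℕ, (∑ i ∈ Finset.range n, X i ω) > y}).toReal :=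
      hCL.eventually (eventually_ge_nhds (by linarith : r - ε₁ < r))
    obtain ⟨y₀, hy₀⟩ := eventually_atTop.mp hlow1
    rw [eventually_atTop]
    refine ⟨y₀ + T, fun x hx => ?_⟩
    have hcore : ENNReal.ofReal ((r - ε₁) * Real.exp (-θ*x)) * ENNReal.ofReal (gr - ε₂)
        ≤ P {ω | ∃ k : ℕ, (∑ i ∈ Finset.range k, X i ω) + ξ k ω > x} := by
      refine le_trans ?_ (hlb x)
      calc ENNReal.ofReal ((r - ε₁) * Real.exp (-θ*x)) * ENNReal.ofReal (gr - ε₂)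
          ≤ ENNReal.ofReal ((r - ε₁) * Real.exp (-θ*x)) * ∫⁻ s, I T s ∂(P.map (ξ 0)) :=
            mul_le_mul_right hT.le _
        _ = ∫⁻ s, ENNReal.ofReal ((r - ε₁) * Real.exp (-θ*x)) * I T s ∂(P.map (ξ 0)) :=
            (lintegral_const_mul _ (hImeas T)).symm
        _ ≤ ∫⁻ s, P {ω | ∃ n, (∑ i ∈ Finset.range n, X i ω) > x - s} ∂(P.map (ξ 0)) := by
            refine lintegral_mono (fun s => ?_)
            simp only [hIdef]
            by_cases hs : s ∈ Set.Icc (-(T:ℝ)) T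
            · rw [Set.indicator_of_mem hs]
              have hys : y₀ ≤ x - s := by
                have := hs.2
                linarith
              have h5 := hy₀ (x - s) hys
              have hprod2 : Real.exp (θ*(x-s)) * Real.exp (-(θ*(x-s))) = 1 := by
                rw [← Real.exp_add, add_neg_cancel, Real.exp_zero]
              have h6 : (r - ε₁) * Real.exp (-(θ*(x-s)))
                  ≤ (P {ω | ∃ n, (∑ i ∈ Finset.range n, X i ω) > x - s}).toReal := by
                have h7 := mul_le_mul_of_nonneg_right h5 (Real.exp_pos (-(θ*(x-s)))).le
                calc (r - ε₁) * Real.exp (-(θ*(x-s)))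
                    ≤ Real.exp (θ*(x-s)) *
                      (P {ω | ∃ n, (∑ i ∈ Finset.range n, X i ω) > x - s}).toReal *
                      Real.exp (-(θ*(x-s))) := h7
                  _ = (P {ω | ∃ n, (∑ i ∈ Finset.range n, X i ω) > x - s}).toReal := by
                      rw [mul_comm (Real.exp (θ*(x-s))), mul_assoc, hprod2, mul_one]
              rw [← ENNReal.ofReal_mul (mul_nonneg (by linarith) (Real.exp_nonneg _))]
              calc ENNReal.ofReal ((r - ε₁) * Real.exp (-θ*x) * Real.exp (θ * s))
                  = ENNReal.ofReal ((r - ε₁) * Real.exp (-(θ*(x-s)))) := by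
                    congr 1
                    rw [mul_assoc, ← Real.exp_add]
                    congr 2
                    ring
                _ ≤ ENNReal.ofReal
                    ((P {ω | ∃ n, (∑ i ∈ Finset.range n, X i ω) > x - s}).toReal) :=
                    ENNReal.ofReal_le_ofReal h6
                _ = P {ω | ∃ n, (∑ i ∈ Finset.range n, X i ω) > x - s} :=
                    ENNReal.ofReal_toReal (measure_ne_top _ _)
            · rw [Set.indicator_of_notMem hs, mul_zero]
              exact zero_le
    have h2 := ENNReal.toReal_mono (measure_ne_top P _) hcore
    rw [ENNReal.toReal_mul,
      ENNReal.toReal_ofReal (mul_nonneg (by linarith) (Real.exp_nonneg _)),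
      ENNReal.toReal_ofReal (by linarith)] at h2
    have hprod : Real.exp (θ*x) * Real.exp (-θ*x) = 1 := by
      rw [← Real.exp_add, show θ*x + -θ*x = 0 by ring, Real.exp_zero]
    have h3 : (r - ε₁) * (gr - ε₂) ≤ Real.exp (θ*x) *
        (P {ω | ∃ k : ℕ, (∑ i ∈ Finset.range k, X i ω) + ξ k ω > x}).toReal := by
      have h4 := mul_le_mul_of_nonneg_left h2 (Real.exp_pos (θ*x)).le
      calc (r - ε₁) * (gr - ε₂)
          = Real.exp (θ*x) * ((r - ε₁) * Real.exp (-θ*x) * (gr - ε₂)) := by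
            have : Real.exp (θ*x) * ((r - ε₁) * Real.exp (-θ*x) * (gr - ε₂))
                = (Real.exp (θ*x) * Real.exp (-θ*x)) * ((r - ε₁) * (gr - ε₂)) := by ring
            rw [this, hprod, one_mul]
        _ ≤ Real.exp (θ*x) *
            (P {ω | ∃ k : ℕ, (∑ i ∈ Finset.range k, X i ω) + ξ k ω > x}).toReal := h4
    have h8 : ε₁ * gr ≤ δ/2 := by
      have hε₁le : ε₁ ≤ δ/(2*(gr+1)) := min_le_right _ _
      have h9 : ε₁ * gr ≤ (δ/(2*(gr+1))) * gr :=
        mul_le_mul_of_nonneg_right hε₁le hgrpos.le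
      refine h9.trans ?_
      rw [div_mul_eq_mul_div, div_le_iff₀ (by positivity)]
      nlinarith
    have h10 : r * ε₂ ≤ δ/2 := by
      have hε₂le : ε₂ ≤ δ/(2*r) := min_le_right _ _
      have h11 : r * ε₂ ≤ r * (δ/(2*r)) := mul_le_mul_of_nonneg_left hε₂le (by linarith)
      refine h11.trans (le_of_eq ?_)
      field_simp
    nlinarith [mul_pos hε₁pos hε₂pos, h3]
  -- conclude
  rw [Filter.liminf_eq]
  have hbdd : BddAbove {a : ℝ | ∀ᶠ x in atTop, a ≤ Real.exp (θ * x) *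
      (P {ω | ∃ k : ℕ, (∑ i ∈ Finset.range k, X i ω) + ξ k ω > x}).toReal} := by
    refine ⟨D₂.toReal, fun a ha => ?_⟩
    obtain ⟨x, hx⟩ := ha.exists
    exact hx.trans (hfB x)
  refine le_of_forall_sub_le (fun δ hδ => ?_)
  exact le_csSup hbdd (hlow δ hδ)
end
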